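/- arXiv:1211.3320 — 3 statements merged into one kernel-verified Lean document; each statement's English description precedes it below -/
import Mathlib

section
/- Let α, β > 0, q₀, q₁ ∈ [1, ∞], θ = α/(α+β) ∈ (0,1) and 1/p = (1-θ)/q₀ + θ/q₁. There exists a constant C such that for every sequence (g_j)_{j∈ℤ} of measurable functions on ℝⁿ and every measurable f such that Σ_{j∈ℤ} g_j(x) converges absolutely to f(x) for a.e. x: ‖f‖_{L^p} ≤ C · ‖ sup_{j∈ℤ} 2^{jα}|g_j| ‖_{L^{q₀}}^{1-θ} · ‖ sup_{j∈ℤ} 2^{-jβ}|g_j| ‖_{L^{q₁}}^{θ}. -/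
open MeasureTheory ENNReal

/-- Weighted `ℓʳ(ℤ)`-type quantity `(∑_{j∈ℤ} (ρ^{js} a_j)^r)^{1/r}`, with the sup
modification when `r = ∞`. -/
noncomputable def wSeq (ρ s : ℝ) (r : ℝ≥0∞) (a : ℤ → ℝ≥0∞) : ℝ≥0∞ :=
  if r = ∞ then ⨆ j : ℤ, ENNReal.ofReal (ρ ^ ((j : ℝ) * s)) * a j
  else (∑' j : ℤ, (ENNReal.ofReal (ρ ^ ((j : ℝ) * s)) * a j) ^ r.toReal) ^ (1 / r.toReal)

/-- Lorentz quasinorm `‖f‖_{L^{p,r}} = (∫_0^∞ (t · μ{|f| > t}^{1/p})^r dt/t)^{1/r}`,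
with the sup modification when `r = ∞`. -/
noncomputable def lorentzNorm {X : Type*} [MeasurableSpace X] (μ : Measure X)
    (p r : ℝ≥0∞) (f : X → ℂ) : ℝ≥0∞ :=
  if r = ∞ then ⨆ t : ℝ, ⨆ _ : 0 < t, ENNReal.ofReal t * μ {x | t < ‖f x‖} ^ (1 / p.toReal)
  else (∫⁻ t in Set.Ioi (0 : ℝ),
      (ENNReal.ofReal t * μ {x | t < ‖f x‖} ^ (1 / p.toReal)) ^ r.toReal /
        ENNReal.ofReal t) ^ (1 / r.toReal)

/-- Besov-type seminorm of a decomposition `g = (g_j)_{j ∈ ℤ}`: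
`(∑_{j∈ℤ} (2^{js} ‖g_j‖_{L^q})^r)^{1/r}`, with the sup modification when `r = ∞`. -/
noncomputable def besovNorm {X : Type*} [MeasurableSpace X] (μ : Measure X)
    (s : ℝ) (q r : ℝ≥0∞) (g : ℤ → X → ℂ) : ℝ≥0∞ :=
  wSeq 2 s r fun j => eLpNorm (g j) q μ

/-- `L^q`-quantity of an `[0,∞]`-valued function, essential sup when `q = ∞`. -/
noncomputable def eLpNormENN {X : Type*} [MeasurableSpace X] (μ : Measure X)
    (q : ℝ≥0∞) (F : X → ℝ≥0∞) : ℝ≥0∞ :=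
  if q = ∞ then essSup F μ else (∫⁻ x, F x ^ q.toReal ∂μ) ^ (1 / q.toReal)


section Aux

-- geometric sum finiteness
lemma geom_fin (γ : ℝ) (hγ : 0 < γ) :
    (∑' n : ℕ, ENNReal.ofReal ((2:ℝ) ^ (-(n:ℝ) * γ))) ≠ ∞ := by
  have hterm : ∀ n : ℕ, ENNReal.ofReal ((2:ℝ) ^ (-(n:ℝ) * γ)) =
      (ENNReal.ofReal ((2:ℝ) ^ (-γ))) ^ n := by
    intro n
    rw [← ENNReal.ofReal_pow (Real.rpow_nonneg (by norm_num) _)]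
    congr 1
    rw [← Real.rpow_natCast ((2:ℝ) ^ (-γ)) n, ← Real.rpow_mul (by norm_num)]
    ring_nf
  simp_rw [hterm]
  rw [ENNReal.tsum_geometric]
  have hlt : ENNReal.ofReal ((2:ℝ) ^ (-γ)) < 1 := by
    rw [← ENNReal.ofReal_one]
    exact ENNReal.ofReal_lt_ofReal_iff_of_nonneg (Real.rpow_nonneg (by norm_num) _) |>.mpr
      (Real.rpow_lt_one_of_one_lt_of_neg (by norm_num) (by linarith))
  simp only [ne_eq, ENNReal.inv_eq_top]
  intro h
  rw [tsub_eq_zero_iff_le] at h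
  exact absurd h (not_le.mpr hlt)

lemma real_core (α β θ : ℝ) (hα : 0 < α) (hβ : 0 < β) (hθ : θ = α / (α + β))
    (A B : ℝ) (hA : 0 < A) (hB : 0 < B) :
    ∃ N : ℤ,
      (2:ℝ) ^ (-(N:ℝ) * α) * A ≤ (2:ℝ) ^ (α + β) * (A ^ (1 - θ) * B ^ θ) ∧
      (2:ℝ) ^ ((N:ℝ) * β) * B ≤ (2:ℝ) ^ (α + β) * (A ^ (1 - θ) * B ^ θ) := by
  have hαβ : 0 < α + β := by linarith
  set L : ℝ := Real.logb 2 (A / B) with hL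
  refine ⟨⌊L / (α + β)⌋, ?_, ?_⟩ <;>
  · have hN1 : (⌊L / (α + β)⌋ : ℝ) ≤ L / (α + β) := Int.floor_le _
    have hN2 : L / (α + β) < (⌊L / (α + β)⌋ : ℝ) + 1 := Int.lt_floor_add_one _
    set N : ℝ := (⌊L / (α + β)⌋ : ℝ)
    have hAB : A = B * (2:ℝ) ^ L := by
      rw [hL, Real.rpow_logb (by norm_num) (by norm_num) (div_pos hA hB)]
      field_simp
    have hP : A ^ (1 - θ) * B ^ θ = B * (2:ℝ) ^ (L * (1 - θ)) := by
      rw [hAB, Real.mul_rpow hB.le (Real.rpow_nonneg (by norm_num) _)]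
      have e1 : B ^ (1 - θ) * ((2:ℝ) ^ L) ^ (1 - θ) * B ^ θ
          = (B ^ (1 - θ) * B ^ θ) * ((2:ℝ) ^ L) ^ (1 - θ) := by ring
      rw [e1, ← Real.rpow_add hB]
      have e2 : 1 - θ + θ = 1 := by ring
      rw [e2, Real.rpow_one, ← Real.rpow_mul (by norm_num)]
    have hLlt : L < (N + 1) * (α + β) := (div_lt_iff₀ hαβ).mp hN2
    have hLge : N * (α + β) ≤ L := (le_div_iff₀ hαβ).mp hN1
    rw [hP]
    first
    | calc (2:ℝ) ^ (-N * α) * A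
            = B * (2:ℝ) ^ (-N * α + L) := by
              rw [hAB, Real.rpow_add (by norm_num)]; ring
        _ ≤ B * (2:ℝ) ^ ((α + β) + L * (1 - θ)) := by
              refine mul_le_mul_of_nonneg_left
                ((Real.rpow_le_rpow_left_iff one_lt_two).mpr ?_) hB.le
              have h1 : L * θ < (N + 1) * α := by
                have h2 : L * (α / (α + β)) < ((N + 1) * (α + β)) * (α / (α + β)) :=
                  mul_lt_mul_of_pos_right hLlt (div_pos hα hαβ)
                have h3 : ((N + 1) * (α + β)) * (α / (α + β)) = (N + 1) * α := by
                  field_simp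
                rw [hθ]; rw [h3] at h2; exact h2
              nlinarith
        _ = (2:ℝ) ^ (α + β) * (B * (2:ℝ) ^ (L * (1 - θ))) := by
              rw [Real.rpow_add (by norm_num)]; ring
    | calc (2:ℝ) ^ (N * β) * B = B * (2:ℝ) ^ (N * β) := by ring
        _ ≤ B * (2:ℝ) ^ ((α + β) + L * (1 - θ)) := by
              refine mul_le_mul_of_nonneg_left
                ((Real.rpow_le_rpow_left_iff one_lt_two).mpr ?_) hB.le
              have h2 : (N * (α + β)) * (β / (α + β)) ≤ L * (β / (α + β)) :=
                mul_le_mul_of_nonneg_right hLge (div_pos hβ hαβ).le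
              have h3 : (N * (α + β)) * (β / (α + β)) = N * β := by field_simp
              have h4 : 1 - θ = β / (α + β) := by rw [hθ]; field_simp; ring
              rw [h3] at h2
              rw [h4]
              nlinarith
        _ = (2:ℝ) ^ (α + β) * (B * (2:ℝ) ^ (L * (1 - θ))) := by
              rw [Real.rpow_add (by norm_num)]; ring
lemma ofReal_rpow_mul_cancel (s t : ℝ) :
    ENNReal.ofReal ((2:ℝ) ^ s) * ENNReal.ofReal ((2:ℝ) ^ t) = ENNReal.ofReal ((2:ℝ) ^ (s + t)) := by
  rw [← ENNReal.ofReal_mul (Real.rpow_nonneg (by norm_num) _), ← Real.rpow_add (by norm_num)]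

lemma key_pointwise (α β θ : ℝ) (hα : 0 < α) (hβ : 0 < β) (hθ : θ = α / (α + β)) :
    ∃ C0 : ℝ≥0∞, C0 ≠ 0 ∧ C0 ≠ ∞ ∧ ∀ a : ℤ → ℝ≥0∞,
      (∑' j : ℤ, a j) ≤
        C0 * (⨆ j : ℤ, ENNReal.ofReal ((2:ℝ) ^ ((j : ℝ) * α)) * a j) ^ (1 - θ) *
          (⨆ j : ℤ, ENNReal.ofReal ((2:ℝ) ^ (-(j : ℝ) * β)) * a j) ^ θ := by
  have hαβ : 0 < α + β := by linarith
  have hθ0 : 0 < θ := hθ ▸ div_pos hα hαβ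
  have hθ1 : θ < 1 := by rw [hθ, div_lt_one hαβ]; linarith
  set S : ℝ≥0∞ := (∑' n : ℕ, ENNReal.ofReal ((2:ℝ) ^ (-(n:ℝ) * α))) +
      (∑' n : ℕ, ENNReal.ofReal ((2:ℝ) ^ (-(n:ℝ) * β))) with hS
  have hSfin : S ≠ ∞ := by
    rw [hS]
    exact ENNReal.add_ne_top.mpr ⟨geom_fin α hα, geom_fin β hβ⟩
  refine ⟨ENNReal.ofReal ((2:ℝ) ^ (α + β)) * S + 1, by simp, ?_, ?_⟩
  · exact ENNReal.add_ne_top.mpr ⟨ENNReal.mul_ne_top ENNReal.ofReal_ne_top hSfin, one_ne_top⟩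
  intro a
  set C0 := ENNReal.ofReal ((2:ℝ) ^ (α + β)) * S + 1 with hC0
  set A := ⨆ j : ℤ, ENNReal.ofReal ((2:ℝ) ^ ((j : ℝ) * α)) * a j with hA
  set B := ⨆ j : ℤ, ENNReal.ofReal ((2:ℝ) ^ (-(j : ℝ) * β)) * a j with hB
  -- individual bounds
  have haj : ∀ j : ℤ, a j ≤ ENNReal.ofReal ((2:ℝ) ^ (-(j:ℝ) * α)) * A := by
    intro j
    have h1 : ENNReal.ofReal ((2:ℝ) ^ ((j:ℝ) * α)) * a j ≤ A :=
      le_iSup (fun j : ℤ => ENNReal.ofReal ((2:ℝ) ^ ((j:ℝ) * α)) * a j) j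
    calc a j = ENNReal.ofReal ((2:ℝ) ^ (-(j:ℝ) * α)) *
          (ENNReal.ofReal ((2:ℝ) ^ ((j:ℝ) * α)) * a j) := by
            rw [← mul_assoc, ofReal_rpow_mul_cancel]
            norm_num
      _ ≤ _ := mul_le_mul_right h1 _
  have hbj : ∀ j : ℤ, a j ≤ ENNReal.ofReal ((2:ℝ) ^ ((j:ℝ) * β)) * B := by
    intro j
    have h1 : ENNReal.ofReal ((2:ℝ) ^ (-(j:ℝ) * β)) * a j ≤ B :=
      le_iSup (fun j : ℤ => ENNReal.ofReal ((2:ℝ) ^ (-(j:ℝ) * β)) * a j) j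
    calc a j = ENNReal.ofReal ((2:ℝ) ^ ((j:ℝ) * β)) *
          (ENNReal.ofReal ((2:ℝ) ^ (-(j:ℝ) * β)) * a j) := by
            rw [← mul_assoc, ofReal_rpow_mul_cancel]
            norm_num
      _ ≤ _ := mul_le_mul_right h1 _
  -- degenerate cases
  rcases eq_or_ne A 0 with hA0 | hA0
  · have : ∀ j : ℤ, a j = 0 := fun j =>
      le_antisymm (by simpa [hA0] using haj j) (zero_le)
    simp [this]
  rcases eq_or_ne B 0 with hB0 | hB0
  · have : ∀ j : ℤ, a j = 0 := fun j =>
      le_antisymm (by simpa [hB0] using hbj j) (zero_le)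
    simp [this]
  have hC00 : C0 ≠ 0 := by simp [hC0]
  rcases eq_or_ne A ∞ with hAtop | hAtop
  · have : C0 * A ^ (1 - θ) * B ^ θ = ∞ := by
      rw [hAtop, ENNReal.top_rpow_of_pos (by linarith)]
      rw [ENNReal.mul_top hC00]
      refine ENNReal.top_mul ?_
      rw [ne_eq, ENNReal.rpow_eq_zero_iff]
      rintro (⟨h, -⟩ | ⟨-, h⟩)
      · exact hB0 h
      · linarith
    rw [this]; exact le_top
  rcases eq_or_ne B ∞ with hBtop | hBtop
  · have : C0 * A ^ (1 - θ) * B ^ θ = ∞ := by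
      rw [hBtop, ENNReal.top_rpow_of_pos hθ0]
      refine ENNReal.mul_top (mul_ne_zero hC00 ?_)
      rw [ne_eq, ENNReal.rpow_eq_zero_iff]
      rintro (⟨h, -⟩ | ⟨-, h⟩)
      · exact hA0 h
      · linarith
    rw [this]; exact le_top
  -- main case
  have hA' : 0 < A.toReal := ENNReal.toReal_pos hA0 hAtop
  have hB' : 0 < B.toReal := ENNReal.toReal_pos hB0 hBtop
  obtain ⟨N, hN1, hN2⟩ := real_core α β θ hα hβ hθ A.toReal B.toReal hA' hB'
  set P : ℝ≥0∞ := A ^ (1 - θ) * B ^ θ with hP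
  have hPeq : P = ENNReal.ofReal (A.toReal ^ (1 - θ) * B.toReal ^ θ) := by
    rw [hP, ENNReal.ofReal_mul (Real.rpow_nonneg hA'.le _),
      ← ENNReal.ofReal_rpow_of_pos hA', ← ENNReal.ofReal_rpow_of_pos hB',
      ENNReal.ofReal_toReal hAtop, ENNReal.ofReal_toReal hBtop]
  set M : ℝ≥0∞ := ENNReal.ofReal ((2:ℝ) ^ (α + β)) * P with hM
  have hAM : ENNReal.ofReal ((2:ℝ) ^ (-(N:ℝ) * α)) * A ≤ M := by
    calc ENNReal.ofReal ((2:ℝ) ^ (-(N:ℝ) * α)) * A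
        = ENNReal.ofReal ((2:ℝ) ^ (-(N:ℝ) * α) * A.toReal) := by
          rw [ENNReal.ofReal_mul (Real.rpow_nonneg (by norm_num) _),
            ENNReal.ofReal_toReal hAtop]
      _ ≤ ENNReal.ofReal ((2:ℝ) ^ (α + β) * (A.toReal ^ (1 - θ) * B.toReal ^ θ)) :=
          ENNReal.ofReal_le_ofReal hN1
      _ = M := by
          rw [hM, hPeq, ENNReal.ofReal_mul (Real.rpow_nonneg (by norm_num) _)]
  have hBM : ENNReal.ofReal ((2:ℝ) ^ ((N:ℝ) * β)) * B ≤ M := by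
    calc ENNReal.ofReal ((2:ℝ) ^ ((N:ℝ) * β)) * B
        = ENNReal.ofReal ((2:ℝ) ^ ((N:ℝ) * β) * B.toReal) := by
          rw [ENNReal.ofReal_mul (Real.rpow_nonneg (by norm_num) _),
            ENNReal.ofReal_toReal hBtop]
      _ ≤ ENNReal.ofReal ((2:ℝ) ^ (α + β) * (A.toReal ^ (1 - θ) * B.toReal ^ θ)) :=
          ENNReal.ofReal_le_ofReal hN2
      _ = M := by
          rw [hM, hPeq, ENNReal.ofReal_mul (Real.rpow_nonneg (by norm_num) _)]
  set w : ℤ → ℝ≥0∞ := fun m =>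
    if 0 ≤ m then ENNReal.ofReal ((2:ℝ) ^ (-(m:ℝ) * α)) else ENNReal.ofReal ((2:ℝ) ^ ((m:ℝ) * β))
    with hw
  have hpt : ∀ j : ℤ, a j ≤ w (j - N) * M := by
    intro j
    rcases le_or_gt N j with h | h
    · have hm : (0:ℤ) ≤ j - N := by omega
      rw [hw]
      simp only [hm, if_pos]
      calc a j ≤ ENNReal.ofReal ((2:ℝ) ^ (-(j:ℝ) * α)) * A := haj j
        _ = ENNReal.ofReal ((2:ℝ) ^ (-((j:ℤ) - N : ℤ) * α : ℝ)) *
              (ENNReal.ofReal ((2:ℝ) ^ (-(N:ℝ) * α)) * A) := by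
            rw [← mul_assoc, ofReal_rpow_mul_cancel]
            push_cast
            ring_nf
        _ ≤ _ := mul_le_mul_right hAM _
    · have hm : ¬ (0:ℤ) ≤ j - N := by omega
      rw [hw]
      simp only [hm, if_neg, if_false]
      calc a j ≤ ENNReal.ofReal ((2:ℝ) ^ ((j:ℝ) * β)) * B := hbj j
        _ = ENNReal.ofReal ((2:ℝ) ^ ((((j:ℤ) - N : ℤ) : ℝ) * β)) *
              (ENNReal.ofReal ((2:ℝ) ^ ((N:ℝ) * β)) * B) := by
            rw [← mul_assoc, ofReal_rpow_mul_cancel]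
            push_cast
            ring_nf
        _ ≤ _ := mul_le_mul_right hBM _
  have hsum1 : (∑' j : ℤ, a j) ≤ ∑' j : ℤ, w (j - N) * M := ENNReal.tsum_le_tsum hpt
  have hsum2 : (∑' j : ℤ, w (j - N) * M) = (∑' m : ℤ, w m) * M := by
    rw [← ENNReal.tsum_mul_right]
    exact (Equiv.subRight N).tsum_eq (fun m => w m * M)
  have hW : (∑' m : ℤ, w m) ≤ S := by
    rw [tsum_of_nat_of_neg_add_one ENNReal.summable ENNReal.summable, hS]
    refine add_le_add (le_of_eq (tsum_congr fun n => ?_)) (ENNReal.tsum_le_tsum fun n => ?_)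
    · rw [hw]
      simp only [Int.ofNat_nonneg, if_pos]
      norm_num
    · rw [hw]
      have : ¬ (0:ℤ) ≤ -((n:ℤ) + 1) := by omega
      simp only [this, if_neg, if_false]
      refine ENNReal.ofReal_le_ofReal ?_
      rw [Real.rpow_le_rpow_left_iff one_lt_two]
      push_cast
      nlinarith [hβ]
  calc (∑' j : ℤ, a j) ≤ (∑' m : ℤ, w m) * M := hsum1.trans (le_of_eq hsum2)
    _ ≤ S * M := mul_le_mul_left hW _
    _ = (S * ENNReal.ofReal ((2:ℝ) ^ (α + β))) * P := by rw [hM, mul_assoc]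
    _ ≤ C0 * P := by
        refine mul_le_mul_left ?_ _
        rw [hC0, mul_comm]
        exact le_self_add
    _ = C0 * A ^ (1 - θ) * B ^ θ := by rw [hP, mul_assoc]
variable {X : Type*} [MeasurableSpace X] {μ : Measure X}

lemma eLpNormENN_mono_ae {q : ℝ≥0∞} {h₁ h₂ : X → ℝ≥0∞} (h : h₁ ≤ᵐ[μ] h₂) :
    eLpNormENN μ q h₁ ≤ eLpNormENN μ q h₂ := by
  unfold eLpNormENN
  split_ifs
  · exact essSup_mono_ae h
  · refine ENNReal.rpow_le_rpow ?_ (by positivity)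
    refine lintegral_mono_ae (h.mono fun x hx => ?_)
    exact ENNReal.rpow_le_rpow hx ENNReal.toReal_nonneg

lemma eLpNormENN_const_mul_le {q : ℝ≥0∞} (hq : q ≠ 0) {c : ℝ≥0∞} (hc : c ≠ ∞)
    (h : X → ℝ≥0∞) :
    eLpNormENN μ q (fun x => c * h x) ≤ c * eLpNormENN μ q h := by
  unfold eLpNormENN
  split_ifs with hqT
  · exact le_of_eq ENNReal.essSup_const_mul
  · have hqt : 0 < q.toReal := ENNReal.toReal_pos hq hqT
    refine le_of_eq ?_
    simp_rw [ENNReal.mul_rpow_of_nonneg _ _ ENNReal.toReal_nonneg]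
    rw [lintegral_const_mul' _ _ (ENNReal.rpow_ne_top_of_nonneg ENNReal.toReal_nonneg hc),
      ENNReal.mul_rpow_of_nonneg _ _ (by positivity : (0:ℝ) ≤ 1 / q.toReal),
      ← ENNReal.rpow_mul, mul_one_div, div_self hqt.ne', ENNReal.rpow_one]

lemma eLpNorm_eq_eLpNormENN {p : ℝ≥0∞} (hp : p ≠ 0) {f : X → ℂ} :
    eLpNorm f p μ = eLpNormENN μ p (fun x => (‖f x‖₊ : ℝ≥0∞)) := by
  unfold eLpNormENN
  split_ifs with hpT
  · rw [hpT, eLpNorm_exponent_top, eLpNormEssSup]; rfl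
  · exact eLpNorm_eq_lintegral_rpow_enorm_toReal hp hpT

lemma hoelder_interp {F G : X → ℝ≥0∞} (hF : AEMeasurable F μ) (hG : AEMeasurable G μ)
    {a b : ℝ} (ha : 0 < a) (hb : 0 < b) (hab : a + b = 1)
    {q₀ q₁ p : ℝ≥0∞} (hq₀ : 1 ≤ q₀) (hq₁ : 1 ≤ q₁)
    (hp : p⁻¹ = ENNReal.ofReal a * q₀⁻¹ + ENNReal.ofReal b * q₁⁻¹) :
    eLpNormENN μ p (fun x => F x ^ a * G x ^ b) ≤
      (eLpNormENN μ q₀ F) ^ a * (eLpNormENN μ q₁ G) ^ b := by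
  have hq₀0 : q₀ ≠ 0 := by intro h; rw [h] at hq₀; simp at hq₀
  have hq₁0 : q₁ ≠ 0 := by intro h; rw [h] at hq₁; simp at hq₁
  have hp0 : p ≠ 0 := by
    intro h
    rw [h, ENNReal.inv_zero] at hp
    have h1 : ENNReal.ofReal a * q₀⁻¹ ≠ ∞ :=
      ENNReal.mul_ne_top ENNReal.ofReal_ne_top (by simp [hq₀0])
    have h2 : ENNReal.ofReal b * q₁⁻¹ ≠ ∞ :=
      ENNReal.mul_ne_top ENNReal.ofReal_ne_top (by simp [hq₁0])
    exact (ENNReal.add_ne_top.mpr ⟨h1, h2⟩) hp.symm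
  rcases eq_or_ne q₀ ∞ with hq₀T | hq₀T
  · rcases eq_or_ne q₁ ∞ with hq₁T | hq₁T
    · -- both infinite : p = ∞
      have hpT : p = ∞ := by
        rw [← ENNReal.inv_eq_zero] at *
        rw [hp, hq₀T, hq₁T]; simp
      unfold eLpNormENN
      rw [if_pos hpT, if_pos hq₀T, if_pos hq₁T]
      refine essSup_le_of_ae_le _ ?_
      filter_upwards [ae_le_essSup F, ae_le_essSup G] with x h1 h2
      exact mul_le_mul' (ENNReal.rpow_le_rpow h1 ha.le) (ENNReal.rpow_le_rpow h2 hb.le)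
    · -- q₀ = ∞, q₁ < ∞
      have hpT : p ≠ ∞ := by
        intro h
        rw [h] at hp
        simp only [ENNReal.inv_top] at hp
        have : ENNReal.ofReal b * q₁⁻¹ = 0 := by
          have := hp.symm
          exact le_antisymm (le_trans le_add_self this.le) (zero_le)
        rcases mul_eq_zero.mp this with h' | h'
        · rw [ENNReal.ofReal_eq_zero] at h'; linarith
        · exact hq₁T (ENNReal.inv_eq_zero.mp h')
      have hpt : 0 < p.toReal := ENNReal.toReal_pos hp0 hpT
      have hq₁t : 0 < q₁.toReal := ENNReal.toReal_pos hq₁0 hq₁T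
      -- b * p.toReal = q₁.toReal  i.e. 1/pt = b/q₁t
      have hp' : p⁻¹ = ENNReal.ofReal b * q₁⁻¹ := by rw [hp, hq₀T]; simp
      have hrel : p.toReal⁻¹ = b * q₁.toReal⁻¹ := by
        rw [← ENNReal.toReal_inv, hp', ENNReal.toReal_mul, ENNReal.toReal_ofReal hb.le,
          ENNReal.toReal_inv]
      unfold eLpNormENN
      rw [if_neg hpT, if_pos hq₀T, if_neg hq₁T]
      set E := essSup F μ with hE
      calc (∫⁻ x, (F x ^ a * G x ^ b) ^ p.toReal ∂μ) ^ (1 / p.toReal)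
          ≤ (∫⁻ x, E ^ (a * p.toReal) * G x ^ (b * p.toReal) ∂μ) ^ (1 / p.toReal) := by
            refine ENNReal.rpow_le_rpow ?_ (by positivity)
            refine lintegral_mono_ae ((ae_le_essSup F).mono fun x hx => ?_)
            rw [ENNReal.mul_rpow_of_nonneg _ _ ENNReal.toReal_nonneg,
              ← ENNReal.rpow_mul, ← ENNReal.rpow_mul]
            exact mul_le_mul' (ENNReal.rpow_le_rpow hx (by positivity)) le_rfl
        _ = (E ^ (a * p.toReal) * ∫⁻ x, G x ^ (b * p.toReal) ∂μ) ^ (1 / p.toReal) := by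
            rw [lintegral_const_mul'' _ (hG.pow_const _)]
        _ = E ^ a * (∫⁻ x, G x ^ q₁.toReal ∂μ) ^ (1 / p.toReal) := by
            have : b * p.toReal = q₁.toReal := by
              field_simp at hrel
              nlinarith [hrel]
            rw [this, ENNReal.mul_rpow_of_nonneg _ _ (by positivity : (0:ℝ) ≤ 1 / p.toReal),
              ← ENNReal.rpow_mul]
            congr 2
            field_simp
        _ = E ^ a * ((∫⁻ x, G x ^ q₁.toReal ∂μ) ^ (1 / q₁.toReal)) ^ b := by
            rw [← ENNReal.rpow_mul]
            congr 2
            rw [one_div, one_div, hrel]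
            ring
  · rcases eq_or_ne q₁ ∞ with hq₁T | hq₁T
    · -- q₀ < ∞, q₁ = ∞ (symmetric)
      have hpT : p ≠ ∞ := by
        intro h
        rw [h] at hp
        simp only [ENNReal.inv_top] at hp
        have : ENNReal.ofReal a * q₀⁻¹ = 0 := by
          have := hp.symm
          exact le_antisymm (le_trans le_self_add this.le) (zero_le)
        rcases mul_eq_zero.mp this with h' | h'
        · rw [ENNReal.ofReal_eq_zero] at h'; linarith
        · exact hq₀T (ENNReal.inv_eq_zero.mp h')
      have hpt : 0 < p.toReal := ENNReal.toReal_pos hp0 hpT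
      have hq₀t : 0 < q₀.toReal := ENNReal.toReal_pos hq₀0 hq₀T
      have hp' : p⁻¹ = ENNReal.ofReal a * q₀⁻¹ := by rw [hp, hq₁T]; simp
      have hrel : p.toReal⁻¹ = a * q₀.toReal⁻¹ := by
        rw [← ENNReal.toReal_inv, hp', ENNReal.toReal_mul, ENNReal.toReal_ofReal ha.le,
          ENNReal.toReal_inv]
      unfold eLpNormENN
      rw [if_neg hpT, if_pos hq₁T, if_neg hq₀T]
      set E := essSup G μ with hE
      calc (∫⁻ x, (F x ^ a * G x ^ b) ^ p.toReal ∂μ) ^ (1 / p.toReal)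
          ≤ (∫⁻ x, F x ^ (a * p.toReal) * E ^ (b * p.toReal) ∂μ) ^ (1 / p.toReal) := by
            refine ENNReal.rpow_le_rpow ?_ (by positivity)
            refine lintegral_mono_ae ((ae_le_essSup G).mono fun x hx => ?_)
            rw [ENNReal.mul_rpow_of_nonneg _ _ ENNReal.toReal_nonneg,
              ← ENNReal.rpow_mul, ← ENNReal.rpow_mul]
            exact mul_le_mul' le_rfl (ENNReal.rpow_le_rpow hx (by positivity))
        _ = ((∫⁻ x, F x ^ (a * p.toReal) ∂μ) * E ^ (b * p.toReal)) ^ (1 / p.toReal) := by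
            rw [lintegral_mul_const'' _ (hF.pow_const _)]
        _ = (∫⁻ x, F x ^ q₀.toReal ∂μ) ^ (1 / p.toReal) * E ^ b := by
            have hapt : a * p.toReal = q₀.toReal := by
              field_simp at hrel
              nlinarith [hrel]
            rw [hapt, ENNReal.mul_rpow_of_nonneg _ _ (by positivity : (0:ℝ) ≤ 1 / p.toReal),
              ← ENNReal.rpow_mul]
            congr 2
            field_simp
        _ = ((∫⁻ x, F x ^ q₀.toReal ∂μ) ^ (1 / q₀.toReal)) ^ a * E ^ b := by
            rw [← ENNReal.rpow_mul]
            congr 2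
            rw [one_div, one_div, hrel]
            ring
    · -- both finite
      have hpT : p ≠ ∞ := by
        intro h
        rw [h] at hp
        simp only [ENNReal.inv_top] at hp
        have h1 : ENNReal.ofReal a * q₀⁻¹ = 0 :=
          le_antisymm (le_trans le_self_add hp.symm.le) (zero_le)
        rcases mul_eq_zero.mp h1 with h' | h'
        · rw [ENNReal.ofReal_eq_zero] at h'; linarith
        · exact hq₀T (ENNReal.inv_eq_zero.mp h')
      have hpt : 0 < p.toReal := ENNReal.toReal_pos hp0 hpT
      have hq₀t : 0 < q₀.toReal := ENNReal.toReal_pos hq₀0 hq₀T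
      have hq₁t : 0 < q₁.toReal := ENNReal.toReal_pos hq₁0 hq₁T
      have hrel : p.toReal⁻¹ = a * q₀.toReal⁻¹ + b * q₁.toReal⁻¹ := by
        rw [← ENNReal.toReal_inv, hp,
          ENNReal.toReal_add (ENNReal.mul_ne_top ENNReal.ofReal_ne_top (by simp [hq₀0]))
            (ENNReal.mul_ne_top ENNReal.ofReal_ne_top (by simp [hq₁0])),
          ENNReal.toReal_mul, ENNReal.toReal_mul, ENNReal.toReal_ofReal ha.le,
          ENNReal.toReal_ofReal hb.le, ENNReal.toReal_inv, ENNReal.toReal_inv]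
      set u : ℝ := a * p.toReal / q₀.toReal with hu'
      set v : ℝ := b * p.toReal / q₁.toReal with hv'
      have hu : 0 < u := by positivity
      have hv : 0 < v := by positivity
      have huv : u + v = 1 := by
        rw [hu', hv']
        field_simp
        field_simp at hrel
        nlinarith [hrel]
      have hconj : Real.HolderConjugate u⁻¹ v⁻¹ := by
        refine ⟨?_, by positivity, by positivity⟩
        rw [inv_inv, inv_inv, inv_one]
        exact huv
      unfold eLpNormENN
      rw [if_neg hpT, if_neg hq₀T, if_neg hq₁T]
      calc (∫⁻ x, (F x ^ a * G x ^ b) ^ p.toReal ∂μ) ^ (1 / p.toReal)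
          = (∫⁻ x, F x ^ (a * p.toReal) * G x ^ (b * p.toReal) ∂μ) ^ (1 / p.toReal) := by
            congr 1
            refine lintegral_congr fun x => ?_
            rw [ENNReal.mul_rpow_of_nonneg _ _ ENNReal.toReal_nonneg,
              ← ENNReal.rpow_mul, ← ENNReal.rpow_mul]
        _ ≤ ((∫⁻ x, (F x ^ (a * p.toReal)) ^ u⁻¹ ∂μ) ^ (1 / u⁻¹) *
              (∫⁻ x, (G x ^ (b * p.toReal)) ^ v⁻¹ ∂μ) ^ (1 / v⁻¹)) ^ (1 / p.toReal) :=
            ENNReal.rpow_le_rpow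
              (ENNReal.lintegral_mul_le_Lp_mul_Lq μ hconj (hF.pow_const _) (hG.pow_const _))
              (by positivity)
        _ = ((∫⁻ x, F x ^ q₀.toReal ∂μ) ^ u * (∫⁻ x, G x ^ q₁.toReal ∂μ) ^ v) ^ (1 / p.toReal) := by
            congr 2
            · refine congrArg₂ _ (lintegral_congr fun x => ?_) ?_
              · rw [← ENNReal.rpow_mul]
                congr 1
                rw [hu']
                field_simp
              · rw [one_div, inv_inv]
            · refine congrArg₂ _ (lintegral_congr fun x => ?_) ?_
              · rw [← ENNReal.rpow_mul]
                congr 1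
                rw [hv']
                field_simp
              · rw [one_div, inv_inv]
        _ = ((∫⁻ x, F x ^ q₀.toReal ∂μ) ^ (1 / q₀.toReal)) ^ a *
              ((∫⁻ x, G x ^ q₁.toReal ∂μ) ^ (1 / q₁.toReal)) ^ b := by
            rw [ENNReal.mul_rpow_of_nonneg _ _ (by positivity : (0:ℝ) ≤ 1 / p.toReal),
              ← ENNReal.rpow_mul, ← ENNReal.rpow_mul, ← ENNReal.rpow_mul, ← ENNReal.rpow_mul]
            congr 2
            · rw [hu']; field_simp
            · rw [hv']; field_simp

end Aux

/-- Theorem 1 of the paper, inequality (6), for an arbitrary a.e. absolutely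
convergent decomposition `f = ∑_{j∈ℤ} g_j` on `ℝⁿ`:
`‖f‖_{L^p} ≤ C ‖sup_j 2^{jα}|g_j|‖_{L^{q₀}}^{1-θ} ‖sup_j 2^{-jβ}|g_j|‖_{L^{q₁}}^θ`
where `θ = α/(α+β)` and `1/p = (1-θ)/q₀ + θ/q₁`. -/
theorem statement2 (n : ℕ) (α β : ℝ) (hα : 0 < α) (hβ : 0 < β)
    (q₀ q₁ : ℝ≥0∞) (hq₀ : 1 ≤ q₀) (hq₁ : 1 ≤ q₁)
    (θ : ℝ) (hθ : θ = α / (α + β))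
    (p : ℝ≥0∞) (hp : p⁻¹ = ENNReal.ofReal (1 - θ) * q₀⁻¹ + ENNReal.ofReal θ * q₁⁻¹) :
    ∃ C : ℝ≥0∞, C ≠ ∞ ∧ ∀ (g : ℤ → (Fin n → ℝ) → ℂ) (f : (Fin n → ℝ) → ℂ),
      (∀ j, Measurable (g j)) → Measurable f →
      (∀ᵐ x ∂(volume : Measure (Fin n → ℝ)),
        (Summable fun j => ‖g j x‖) ∧ HasSum (fun j => g j x) (f x)) →
      eLpNorm f p volume ≤
        C * eLpNormENN volume q₀
            (fun x => ⨆ j : ℤ, ENNReal.ofReal ((2 : ℝ) ^ ((j : ℝ) * α)) * (‖g j x‖₊ : ℝ≥0∞)) ^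
              (1 - θ) *
          eLpNormENN volume q₁
            (fun x => ⨆ j : ℤ, ENNReal.ofReal ((2 : ℝ) ^ (-(j : ℝ) * β)) * (‖g j x‖₊ : ℝ≥0∞)) ^
              θ := by
  have hαβ : 0 < α + β := by linarith
  have hθ0 : 0 < θ := hθ ▸ div_pos hα hαβ
  have hθ1 : θ < 1 := by rw [hθ, div_lt_one hαβ]; linarith
  obtain ⟨C0, hC00, hC0T, hkey⟩ := key_pointwise α β θ hα hβ hθ
  refine ⟨C0, hC0T, ?_⟩
  intro g f hg hf hae
  set F : (Fin n → ℝ) → ℝ≥0∞ :=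
    fun x => ⨆ j : ℤ, ENNReal.ofReal ((2:ℝ) ^ ((j : ℝ) * α)) * (‖g j x‖₊ : ℝ≥0∞) with hF
  set G : (Fin n → ℝ) → ℝ≥0∞ :=
    fun x => ⨆ j : ℤ, ENNReal.ofReal ((2:ℝ) ^ (-(j : ℝ) * β)) * (‖g j x‖₊ : ℝ≥0∞) with hG
  have hFm : Measurable F :=
    Measurable.iSup fun j => measurable_const.mul ((hg j).nnnorm.coe_nnreal_ennreal)
  have hGm : Measurable G :=
    Measurable.iSup fun j => measurable_const.mul ((hg j).nnnorm.coe_nnreal_ennreal)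
  have hq₀0 : q₀ ≠ 0 := by intro h; rw [h] at hq₀; simp at hq₀
  have hq₁0 : q₁ ≠ 0 := by intro h; rw [h] at hq₁; simp at hq₁
  have hp0 : p ≠ 0 := by
    intro h
    rw [h, ENNReal.inv_zero] at hp
    have h1 : ENNReal.ofReal (1 - θ) * q₀⁻¹ ≠ ∞ :=
      ENNReal.mul_ne_top ENNReal.ofReal_ne_top (by simp [hq₀0])
    have h2 : ENNReal.ofReal θ * q₁⁻¹ ≠ ∞ :=
      ENNReal.mul_ne_top ENNReal.ofReal_ne_top (by simp [hq₁0])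
    exact (ENNReal.add_ne_top.mpr ⟨h1, h2⟩) hp.symm
  -- pointwise a.e. bound
  have hptw : ∀ᵐ x ∂(volume : Measure (Fin n → ℝ)),
      (‖f x‖₊ : ℝ≥0∞) ≤ C0 * (F x ^ (1 - θ) * G x ^ θ) := by
    filter_upwards [hae] with x hx
    obtain ⟨hsum, hs⟩ := hx
    have hx1 : ‖f x‖ ≤ ∑' j : ℤ, ‖g j x‖ := by
      rw [← hs.tsum_eq]
      exact norm_tsum_le_tsum_norm hsum
    have hx2 : (‖f x‖₊ : ℝ≥0∞) ≤ ∑' j : ℤ, (‖g j x‖₊ : ℝ≥0∞) := by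
      rw [show (‖f x‖₊ : ℝ≥0∞) = ENNReal.ofReal ‖f x‖ from (ofReal_norm _).symm]
      calc ENNReal.ofReal ‖f x‖ ≤ ENNReal.ofReal (∑' j : ℤ, ‖g j x‖) :=
            ENNReal.ofReal_le_ofReal hx1
        _ = ∑' j : ℤ, ENNReal.ofReal ‖g j x‖ :=
            ENNReal.ofReal_tsum_of_nonneg (fun j => norm_nonneg _) hsum
        _ = ∑' j : ℤ, (‖g j x‖₊ : ℝ≥0∞) := by
            simp_rw [ofReal_norm, enorm_eq_nnnorm]
    refine hx2.trans ?_
    calc (∑' j : ℤ, (‖g j x‖₊ : ℝ≥0∞))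
        ≤ C0 * (⨆ j : ℤ, ENNReal.ofReal ((2:ℝ) ^ ((j : ℝ) * α)) * (‖g j x‖₊ : ℝ≥0∞)) ^ (1 - θ) *
            (⨆ j : ℤ, ENNReal.ofReal ((2:ℝ) ^ (-(j : ℝ) * β)) * (‖g j x‖₊ : ℝ≥0∞)) ^ θ :=
          hkey _
      _ = C0 * (F x ^ (1 - θ) * G x ^ θ) := by rw [hF, hG, mul_assoc]
  calc eLpNorm f p volume
      = eLpNormENN volume p (fun x => (‖f x‖₊ : ℝ≥0∞)) := eLpNorm_eq_eLpNormENN hp0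
    _ ≤ eLpNormENN volume p (fun x => C0 * (F x ^ (1 - θ) * G x ^ θ)) :=
        eLpNormENN_mono_ae hptw
    _ ≤ C0 * eLpNormENN volume p (fun x => F x ^ (1 - θ) * G x ^ θ) :=
        eLpNormENN_const_mul_le hp0 hC0T _
    _ ≤ C0 * ((eLpNormENN volume q₀ F) ^ (1 - θ) * (eLpNormENN volume q₁ G) ^ θ) := by
        refine mul_le_mul_right ?_ _
        exact hoelder_interp hFm.aemeasurable hGm.aemeasurable (by linarith) hθ0 (by ring)
          hq₀ hq₁ hp
    _ = C0 * eLpNormENN volume q₀ F ^ (1 - θ) * eLpNormENN volume q₁ G ^ θ := by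
        rw [mul_assoc]
end

section
/- Let (X, μ) be a sigma-finite measure space, 1 < p < ∞ and 1 ≤ r ≤ ∞. There exists a constant C₀ such that every measurable f : X → ℂ with ‖f‖_{L^{p,r}} < ∞ can be decomposed as f = Σ_{j∈ℤ} f_j pointwise, where the f_j are measurable, have pairwise disjoint supports (f_j f_k = 0 whenever j ≠ k), and satisfy ( Σ_{j∈ℤ} (2^{-j(p-1)/p} ‖f_j‖_{L^1})^r )^{1/r} + ( Σ_{j∈ℤ} (2^{j/p} ‖f_j‖_{L^∞})^r )^{1/r} ≤ C₀ ‖f‖_{L^{p,r}} (with sup modifications when r = ∞). -/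
open MeasureTheory ENNReal Filter Topology Set

lemma telescope_tsum (b : ℕ → ℝ≥0∞) (hmono : ∀ n, b (n+1) ≤ b n)
    (h0 : Tendsto b atTop (𝓝 0)) : ∑' i, (b i - b (i+1)) = b 0 := by
  have hanti : Antitone b := antitone_nat_of_succ_le hmono
  have hb0 : ∀ n, b n ≤ b 0 := fun n => hanti (Nat.zero_le n)
  have hpart : ∀ n, (∑ i ∈ Finset.range n, (b i - b (i+1))) = b 0 - b n := by
    intro n
    induction n with
    | zero => simp
    | succ n ih =>
      rw [Finset.sum_range_succ, ih]
      exact tsub_add_tsub_cancel (hb0 n) (hmono n)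
  apply le_antisymm
  · rw [ENNReal.tsum_eq_iSup_sum]
    apply iSup_le
    intro s
    calc ∑ i ∈ s, (b i - b (i+1)) ≤ ∑ i ∈ Finset.range (s.sup id + 1), (b i - b (i+1)) := by
          apply Finset.sum_le_sum_of_subset
          intro i hi
          exact Finset.mem_range.2 (Nat.lt_succ_of_le (Finset.le_sup (f := id) hi))
      _ = b 0 - b (s.sup id + 1) := hpart _
      _ ≤ b 0 := tsub_le_self
  · have h1 : ∀ n, b 0 ≤ (∑' i, (b i - b (i+1))) + b n := by
      intro n
      have h2 : (∑ i ∈ Finset.range n, (b i - b (i+1))) ≤ ∑' i, (b i - b (i+1)) :=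
        ENNReal.sum_le_tsum _
      calc b 0 ≤ (b 0 - b n) + b n := le_tsub_add
        _ = (∑ i ∈ Finset.range n, (b i - b (i+1))) + b n := by rw [hpart n]
        _ ≤ (∑' i, (b i - b (i+1))) + b n := add_le_add_left h2 _
    have h3 : Tendsto (fun n => (∑' i, (b i - b (i+1))) + b n) atTop
        (𝓝 ((∑' i, (b i - b (i+1))) + 0)) := Tendsto.const_add _ h0
    rw [add_zero] at h3
    exact ge_of_tendsto' h3 h1

lemma abel_tsum (q : ℝ≥0∞) (W b : ℤ → ℝ≥0∞)
    (hW : ∀ (k : ℤ) (i : ℕ), W (k - i) = W k * q ^ i)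
    (hbmono : ∀ k, b (k+1) ≤ b k)
    (hb0 : ∀ k : ℤ, Tendsto (fun i : ℕ => b (k + i)) atTop (𝓝 0)) :
    ∑' k : ℤ, W k * b k ≤ (1 - q)⁻¹ * ∑' k : ℤ, W k * (b k - b (k+1)) := by
  have hbk : ∀ k : ℤ, b k = ∑' i : ℕ, (b (k + i) - b (k + i + 1)) := by
    intro k
    have := telescope_tsum (fun i => b (k + i))
      (fun n => by simpa [add_assoc] using hbmono (k + n)) (hb0 k)
    simp only [Nat.cast_add, Nat.cast_one, ← add_assoc] at this ⊢
    rw [this]; simp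
  refine le_of_eq ?_
  calc ∑' k : ℤ, W k * b k = ∑' (k : ℤ) (i : ℕ), W k * (b (k + i) - b (k + i + 1)) := by
        refine tsum_congr fun k => ?_
        rw [hbk k, ENNReal.tsum_mul_left]
      _ = ∑' (i : ℕ) (k : ℤ), W k * (b (k + i) - b (k + i + 1)) := ENNReal.tsum_comm
      _ = ∑' (i : ℕ) (k : ℤ), W (k - i) * (b k - b (k + 1)) := by
        refine tsum_congr fun i => ?_
        rw [← (Equiv.subRight (i : ℤ)).tsum_eq]
        simp [Equiv.subRight, sub_add_cancel]
      _ = ∑' (i : ℕ), q ^ i * ∑' (k : ℤ), W k * (b k - b (k + 1)) := by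
        refine tsum_congr fun i => ?_
        rw [← ENNReal.tsum_mul_left]
        refine tsum_congr fun k => ?_
        rw [hW k i]; ring
      _ = (1 - q)⁻¹ * ∑' (k : ℤ), W k * (b k - b (k+1)) := by
        rw [ENNReal.tsum_mul_right, ENNReal.tsum_geometric]

lemma ennreal_div_helper {t : ℝ} (ht : 0 < t) (c : ℝ≥0∞) {R : ℝ} (hR : 0 ≤ R) :
    (ENNReal.ofReal t * c) ^ R / ENNReal.ofReal t
      = ENNReal.ofReal t ^ (R - 1) * c ^ R := by
  have h0 : ENNReal.ofReal t ≠ 0 := by simp [ENNReal.ofReal_eq_zero]; linarith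
  have h1 : ENNReal.ofReal t ≠ ∞ := ENNReal.ofReal_ne_top
  rw [ENNReal.mul_rpow_of_nonneg _ _ hR]
  have h2 : (ENNReal.ofReal t) ^ R = ENNReal.ofReal t ^ (R - 1) * ENNReal.ofReal t := by
    nth_rewrite 3 [← ENNReal.rpow_one (ENNReal.ofReal t)]
    rw [← ENNReal.rpow_add _ _ h0 h1]
    norm_num
  rw [h2, mul_right_comm, mul_div_assoc, ENNReal.div_self h0 h1, mul_one]

lemma two_rpow_ne_top (y : ℝ) : (2:ℝ≥0∞) ^ y ≠ ∞ := by
  simp [ENNReal.rpow_eq_top_iff]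

lemma two_rpow_ne_zero (y : ℝ) : (2:ℝ≥0∞) ^ y ≠ 0 := by
  simp [ENNReal.rpow_eq_zero_iff]


/-- Lemma 1 of the paper: on a sigma-finite measure space, every
`f ∈ L^{p,r}` decomposes as `f = ∑_{j∈ℤ} f_j` with disjointly supported measurable pieces
satisfying `‖(2^{-j(p-1)/p} ‖f_j‖_{L¹})_j‖_{ℓʳ} + ‖(2^{j/p} ‖f_j‖_{L^∞})_j‖_{ℓʳ} ≤ C₀ ‖f‖_{L^{p,r}}`. -/
theorem statement10 {X : Type*} [MeasurableSpace X] (μ : Measure X) [SigmaFinite μ]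
    (p : ℝ≥0∞) (hp1 : 1 < p) (hp2 : p ≠ ∞) (r : ℝ≥0∞) (hr : 1 ≤ r) :
    ∃ C₀ : ℝ≥0∞, C₀ ≠ ∞ ∧ ∀ f : X → ℂ, Measurable f → lorentzNorm μ p r f ≠ ∞ →
      ∃ F : ℤ → X → ℂ,
        (∀ j, Measurable (F j)) ∧
        (∀ x, HasSum (fun j => F j x) (f x)) ∧
        (∀ j k, j ≠ k → ∀ x, F j x * F k x = 0) ∧
        wSeq 2 (-(p.toReal - 1) / p.toReal) r (fun j => eLpNorm (F j) 1 μ) +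
            wSeq 2 (1 / p.toReal) r (fun j => eLpNorm (F j) ∞ μ) ≤
          C₀ * lorentzNorm μ p r f := by
  classical
  set P := p.toReal with hPdef
  have hP1 : 1 < P := by
    have := ENNReal.toReal_strict_mono hp2 hp1
    simpa using this
  have hPpos : 0 < P := lt_trans one_pos hP1
  have hPne : P ≠ 0 := ne_of_gt hPpos
  have hr0 : r ≠ 0 := fun h => by simp [h] at hr
  set C₁ : ℝ≥0∞ := if r = ∞ then 1 else
    (ENNReal.ofReal r.toReal / (1 - (2:ℝ≥0∞) ^ (-(r.toReal / P)))) ^ (1 / r.toReal) with hC₁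
  have hC₁fin : C₁ ≠ ∞ := by
    rw [hC₁]; split_ifs with h
    · exact one_ne_top
    · have hRpos : 0 < r.toReal := ENNReal.toReal_pos hr0 h
      have hq : (2:ℝ≥0∞) ^ (-(r.toReal / P)) < 1 :=
        ENNReal.rpow_lt_one_of_one_lt_of_neg (by norm_num)
          (by rw [neg_lt, neg_zero]; positivity)
      have hden : (1:ℝ≥0∞) - (2:ℝ≥0∞) ^ (-(r.toReal / P)) ≠ 0 := by
        intro hc
        exact absurd (tsub_eq_zero_iff_le.1 hc) (not_le.2 hq)
      exact ENNReal.rpow_ne_top_of_nonneg (by positivity)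
        (ENNReal.div_lt_top ENNReal.ofReal_ne_top hden).ne
  refine ⟨3 * C₁, ENNReal.mul_ne_top (by norm_num) hC₁fin, ?_⟩
  intro f hf hfin
  set D : ℝ → ℝ≥0∞ := fun t => μ {x | t < ‖f x‖} with hD
  have hDt : ∀ t : ℝ, μ {x | t < ‖f x‖} = D t := fun _ => rfl
  have hDmono : ∀ {s t : ℝ}, s ≤ t → D t ≤ D s := fun h =>
    measure_mono (fun x hx => lt_of_le_of_lt h hx)
  -- finiteness of the distribution function and existence of small values
  have key : (∀ t : ℝ, 0 < t → D t ≠ ∞) ∧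
      (∀ j : ℤ, ∃ t : ℝ, 0 < t ∧ D t ≤ (2:ℝ≥0∞) ^ (j:ℝ)) := by
    by_cases hrtop : r = ∞
    · simp only [lorentzNorm, if_pos hrtop, hDt] at hfin
      have hL : ∀ t : ℝ, 0 < t → ENNReal.ofReal t * D t ^ (1/P) ≤
          ⨆ t : ℝ, ⨆ _ : 0 < t, ENNReal.ofReal t * D t ^ (1/P) := fun t ht =>
        le_iSup₂ (f := fun (t:ℝ) (_ : 0 < t) => ENNReal.ofReal t * D t ^ (1/P)) t ht
      constructor
      · intro t ht hc
        apply hfin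
        rw [eq_top_iff]
        refine le_trans ?_ (hL t ht)
        rw [hc, ENNReal.top_rpow_of_pos (by positivity), ENNReal.mul_top
          (by simp [ENNReal.ofReal_eq_zero]; linarith)]
      · intro j
        by_contra hcon
        push_neg at hcon
        set K := ((2:ℝ≥0∞) ^ ((j:ℝ))) ^ (1/P) with hK
        have hK0 : K ≠ 0 := by
          rw [hK]
          exact (ENNReal.rpow_pos (ENNReal.rpow_pos two_pos ofNat_ne_top) (two_rpow_ne_top _)).ne'
        have hKtop : K ≠ ∞ := ENNReal.rpow_ne_top_of_nonneg (by positivity) (two_rpow_ne_top _)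
        set L := ⨆ t : ℝ, ⨆ _ : 0 < t, ENNReal.ofReal t * D t ^ (1/P) with hLdef
        have hdivtop : L / K ≠ ∞ := (ENNReal.div_lt_top hfin hK0).ne
        have hle : ∀ t : ℝ, 0 < t → ENNReal.ofReal t ≤ L / K := by
          intro t ht
          refine (ENNReal.le_div_iff_mul_le (Or.inl hK0) (Or.inl hKtop)).2 ?_
          refine le_trans ?_ (hL t ht)
          exact mul_le_mul_right (ENNReal.rpow_le_rpow (hcon t ht).le (by positivity)) _
        have h1 := hle ((L/K).toReal + 1) (by positivity)
        have h2 : L / K < ENNReal.ofReal ((L/K).toReal + 1) :=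
          (ENNReal.lt_ofReal_iff_toReal_lt hdivtop).2 (by linarith)
        exact absurd h1 (not_le.2 h2)
    · simp only [lorentzNorm, if_neg hrtop, hDt] at hfin
      set R := r.toReal with hRdef
      have hR1 : 1 ≤ R := by
        have := ENNReal.toReal_mono hrtop hr
        simpa using this
      have hRpos : 0 < R := lt_of_lt_of_le one_pos hR1
      have hI : (∫⁻ t in Set.Ioi (0 : ℝ),
          (ENNReal.ofReal t * D t ^ (1 / P)) ^ R / ENNReal.ofReal t) ≠ ∞ := by
        intro hc
        rw [hc] at hfin
        exact hfin (ENNReal.top_rpow_of_pos (by positivity))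
      constructor
      · intro t ht hc
        apply hI
        rw [eq_top_iff]
        calc (⊤:ℝ≥0∞) = ∫⁻ s in Set.Ioo (0:ℝ) t, ⊤ := by
              rw [setLIntegral_const, Real.volume_Ioo, sub_zero,
                ENNReal.top_mul (by simp [ENNReal.ofReal_eq_zero]; linarith)]
          _ ≤ ∫⁻ s in Set.Ioo (0:ℝ) t,
              (ENNReal.ofReal s * D s ^ (1 / P)) ^ R / ENNReal.ofReal s := by
              refine setLIntegral_mono' measurableSet_Ioo ?_
              intro s hs
              have hDs : D s = ∞ := eq_top_iff.2 (hc ▸ hDmono hs.2.le)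
              rw [hDs, ENNReal.top_rpow_of_pos (by positivity), ENNReal.mul_top
                (by simp [ENNReal.ofReal_eq_zero]; linarith [hs.1]),
                ENNReal.top_rpow_of_pos hRpos,
                ENNReal.top_div_of_ne_top ENNReal.ofReal_ne_top]
          _ ≤ _ := lintegral_mono_set (fun s hs => hs.1)
      · intro j
        by_contra hcon
        push_neg at hcon
        set K := ((2:ℝ≥0∞) ^ ((j:ℝ))) ^ (1/P) with hK
        have hK0 : K ≠ 0 := by
          rw [hK]
          exact (ENNReal.rpow_pos (ENNReal.rpow_pos two_pos ofNat_ne_top) (two_rpow_ne_top _)).ne'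
        have hKtop : K ≠ ∞ := ENNReal.rpow_ne_top_of_nonneg (by positivity) (two_rpow_ne_top _)
        have hKR0 : K ^ R ≠ 0 :=
          (ENNReal.rpow_pos (lt_of_le_of_ne zero_le (Ne.symm hK0)) hKtop).ne'
        apply hI
        rw [eq_top_iff]
        calc (⊤:ℝ≥0∞) = ∫⁻ s in Set.Ioi (1:ℝ), K ^ R := by
              rw [setLIntegral_const, Real.volume_Ioi, ENNReal.mul_top hKR0]
          _ ≤ ∫⁻ s in Set.Ioi (1:ℝ),
              (ENNReal.ofReal s * D s ^ (1 / P)) ^ R / ENNReal.ofReal s := by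
              refine setLIntegral_mono' measurableSet_Ioi ?_
              intro s hs
              have hs0 : (0:ℝ) < s := lt_trans one_pos hs
              calc K ^ R = 1 * K ^ R := (one_mul _).symm
                _ ≤ ENNReal.ofReal s ^ (R - 1) * K ^ R := by
                    refine mul_le_mul_left ?_ _
                    calc (1:ℝ≥0∞) = 1 ^ (R-1) := (ENNReal.one_rpow _).symm
                      _ ≤ ENNReal.ofReal s ^ (R-1) := ENNReal.rpow_le_rpow
                          (by simpa using ENNReal.ofReal_le_ofReal hs.le) (by linarith)
                _ = (ENNReal.ofReal s * K) ^ R / ENNReal.ofReal s :=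
                    (ennreal_div_helper hs0 K hRpos.le).symm
                _ ≤ (ENNReal.ofReal s * D s ^ (1 / P)) ^ R / ENNReal.ofReal s := by
                    gcongr
                    exact ENNReal.rpow_le_rpow (hcon s hs0).le (by positivity)
          _ ≤ _ := lintegral_mono_set (fun s hs => Set.mem_Ioi.2 (lt_trans one_pos (Set.mem_Ioi.1 hs)))
  obtain ⟨hDfin, hsmall⟩ := key
  -- the decreasing rearrangement at dyadic points
  set S : ℤ → Set ℝ := fun j => {t : ℝ | 0 ≤ t ∧ D t ≤ (2:ℝ≥0∞) ^ (j:ℝ)} with hS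
  set m : ℤ → ℝ := fun j => sInf (S j) with hm
  have hSne : ∀ j, (S j).Nonempty := by
    intro j
    obtain ⟨t, ht, hle⟩ := hsmall j
    exact ⟨t, ht.le, hle⟩
  have hSbdd : ∀ j, BddBelow (S j) := fun j => ⟨0, fun t ht => ht.1⟩
  have hm0 : ∀ j, 0 ≤ m j := fun j => le_csInf (hSne j) (fun t ht => ht.1)
  have hmanti : ∀ {j k : ℤ}, j ≤ k → m k ≤ m j := by
    intro j k hjk
    refine csInf_le_csInf (hSbdd k) (hSne j) ?_
    intro t ht
    exact ⟨ht.1, le_trans ht.2 (ENNReal.rpow_le_rpow_of_exponent_le (by norm_num)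
      (by exact_mod_cast hjk))⟩
  have hlt : ∀ (j : ℤ) (t : ℝ), 0 ≤ t → t < m j → (2:ℝ≥0∞) ^ (j:ℝ) < D t := by
    intro j t ht0 htm
    by_contra hc
    push_neg at hc
    exact absurd (csInf_le (hSbdd j) ⟨ht0, hc⟩) (not_le.2 htm)
  have hDm : ∀ j : ℤ, D (m j) ≤ (2:ℝ≥0∞) ^ (j:ℝ) := by
    intro j
    have hset : {x | m j < ‖f x‖} = ⋃ n : ℕ, {x | m j + 1/((n:ℝ)+1) < ‖f x‖} := by
      ext x
      simp only [Set.mem_setOf_eq, Set.mem_iUnion]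
      constructor
      · intro hx
        obtain ⟨n, hn⟩ := exists_nat_one_div_lt (sub_pos.2 hx)
        exact ⟨n, by linarith⟩
      · rintro ⟨n, hn⟩
        have : 0 < 1/((n:ℝ)+1) := by positivity
        linarith
    have heach : ∀ n : ℕ, D (m j + 1/((n:ℝ)+1)) ≤ (2:ℝ≥0∞) ^ (j:ℝ) := by
      intro n
      have hlt' : m j < m j + 1/((n:ℝ)+1) := by
        have : 0 < 1/((n:ℝ)+1) := by positivity
        linarith
      obtain ⟨s, hsS, hs_lt⟩ := (csInf_lt_iff (hSbdd j) (hSne j)).1 hlt'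
      exact le_trans (hDmono hs_lt.le) hsS.2
    have hmonoset : Monotone fun n : ℕ => {x | m j + 1/((n:ℝ)+1) < ‖f x‖} := by
      intro n k hnk x hx
      simp only [Set.mem_setOf_eq] at hx ⊢
      have h1 : 1/((k:ℝ)+1) ≤ 1/((n:ℝ)+1) := by
        apply one_div_le_one_div_of_le (by positivity)
        exact_mod_cast add_le_add_left (Nat.cast_le.2 hnk) 1
      linarith
    calc D (m j) = μ (⋃ n : ℕ, {x | m j + 1/((n:ℝ)+1) < ‖f x‖}) := by
          rw [hD]; simp only []; rw [hset]
      _ = ⨆ n : ℕ, D (m j + 1/((n:ℝ)+1)) := hmonoset.directed_le.measure_iUnion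
      _ ≤ (2:ℝ≥0∞) ^ (j:ℝ) := iSup_le heach
  have hmlt : ∀ v : ℝ, 0 < v → ∃ j : ℤ, m j < v := by
    intro v hv
    obtain ⟨n, hn⟩ := ENNReal.exists_nat_gt (hDfin (v/2) (by positivity))
    have h2 : D (v/2) ≤ (2:ℝ≥0∞) ^ ((n:ℤ):ℝ) := by
      refine le_trans hn.le ?_
      have : ((n:ℝ≥0∞)) ≤ ((2:ℝ≥0∞)) ^ (n:ℕ) := by
        exact_mod_cast Nat.le_of_lt (Nat.lt_two_pow_self)
      rw [show ((n:ℤ):ℝ) = ((n:ℕ):ℝ) by push_cast; ring, ENNReal.rpow_natCast]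
      exact this
    refine ⟨(n:ℤ), lt_of_le_of_lt (csInf_le (hSbdd _) ⟨by positivity, h2⟩) (by linarith)⟩
  have hmtend : ∀ k : ℤ, Tendsto (fun i : ℕ => m (k + i)) atTop (𝓝 0) := by
    intro k
    rw [Metric.tendsto_atTop]
    intro ε hε
    obtain ⟨j₀, hj₀⟩ := hmlt ε hε
    refine ⟨(j₀ - k).toNat, fun i hi => ?_⟩
    have hki : j₀ ≤ k + i := by
      have := Int.self_le_toNat (j₀ - k)
      omega
    have h1 : m (k + i) ≤ m j₀ := hmanti hki
    rw [Real.dist_eq, sub_zero, abs_of_nonneg (hm0 _)]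
    exact lt_of_le_of_lt h1 hj₀
  -- the decomposition sets
  set A : ℤ → Set X := fun j => (fun x => ‖f x‖) ⁻¹' Set.Ioc (m (j+1)) (m j) with hA
  set E : Set X := {x | f x ≠ 0 ∧ ∀ j : ℤ, x ∉ A j} with hE
  set T : ℤ → Set X := fun j => if j = 0 then A 0 ∪ E else A j with hT
  set F : ℤ → X → ℂ := fun j => (T j).indicator f with hF
  have hnorm : Measurable fun x => ‖f x‖ := hf.norm
  have hA_meas : ∀ j, MeasurableSet (A j) := fun j => hnorm measurableSet_Ioc
  have hE_meas : MeasurableSet E := by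
    have : E = (f ⁻¹' {0})ᶜ ∩ ⋂ j : ℤ, (A j)ᶜ := by
      ext x
      simp [hE, Set.mem_iInter]
    rw [this]
    exact ((hf (measurableSet_singleton 0)).compl).inter
      (MeasurableSet.iInter fun j => (hA_meas j).compl)
  have hT_meas : ∀ j, MeasurableSet (T j) := by
    intro j
    rw [hT]
    by_cases hj : j = 0
    · simp only [hj, if_pos rfl]
      exact (hA_meas 0).union hE_meas
    · simp only [if_neg hj]
      exact hA_meas j
  have hF_meas : ∀ j, Measurable (F j) := fun j => hf.indicator (hT_meas j)
  -- disjointness of A's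
  have hAA : ∀ (j k : ℤ), j ≠ k → ∀ x, x ∈ A j → x ∉ A k := by
    intro j k hjk x hxj hxk
    simp only [hA, Set.mem_preimage, Set.mem_Ioc] at hxj hxk
    rcases lt_or_gt_of_ne hjk with h | h
    · have : m k ≤ m (j+1) := hmanti (by omega)
      linarith [hxj.1, hxk.2]
    · have : m j ≤ m (k+1) := hmanti (by omega)
      linarith [hxj.2, hxk.1]
  have hTmem : ∀ j x, x ∈ T j → x ∈ A j ∨ (j = 0 ∧ x ∈ E) := by
    intro j x hx
    simp only [hT] at hx
    by_cases hj : j = 0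
    · subst hj
      rw [if_pos rfl] at hx
      rcases hx with h | h
      · exact Or.inl h
      · exact Or.inr ⟨rfl, h⟩
    · rw [if_neg hj] at hx
      exact Or.inl hx
  have hnotmem : ∀ (j k : ℤ), j ≠ k → ∀ x, x ∈ T j → x ∉ T k := by
    intro j k hjk x hxj hxk
    rcases hTmem j x hxj with hj | ⟨hj0, hjE⟩ <;>
      rcases hTmem k x hxk with hk | ⟨hk0, hkE⟩
    · exact hAA j k hjk x hj hk
    · exact hkE.2 j hj
    · exact hjE.2 k hk
    · exact hjk (hj0.trans hk0.symm)
  have hTA : ∀ j x, x ∈ A j → x ∈ T j := by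
    intro j x hx
    rw [hT]
    by_cases hj : j = 0
    · subst hj; simp only [if_pos rfl]; exact Set.mem_union_left _ hx
    · simp only [if_neg hj]; exact hx
  -- E is null
  have hμE : μ E = 0 := by
    have hE_subset : ∀ j : ℤ, E ⊆ {x | m j < ‖f x‖} := by
      intro j x hx
      obtain ⟨hfx, hnc⟩ := hx
      have hv : 0 < ‖f x‖ := norm_pos_iff.2 hfx
      simp only [Set.mem_setOf_eq]
      by_contra hle
      push_neg at hle
      have hbdd : ∃ b : ℤ, ∀ z : ℤ, m z < ‖f x‖ → b ≤ z := by
        refine ⟨j, fun z hz => ?_⟩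
        by_contra hzj
        push_neg at hzj
        exact absurd (le_trans hle (hmanti hzj.le)) (not_le.2 hz)
      obtain ⟨lb, hlb, hmin⟩ := Int.exists_least_of_bdd hbdd (hmlt _ hv)
      have h1 : ‖f x‖ ≤ m (lb - 1) := by
        by_contra hc
        push_neg at hc
        exact absurd (hmin _ hc) (by omega)
      refine hnc (lb - 1) ?_
      simp only [hA, Set.mem_preimage, Set.mem_Ioc, sub_add_cancel]
      exact ⟨hlb, h1⟩
    have hbound : ∀ n : ℕ, μ E ≤ ((2:ℝ≥0∞)⁻¹) ^ n := by
      intro n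
      calc μ E ≤ D (m (-(n:ℤ))) := measure_mono (hE_subset _)
        _ ≤ ((2:ℝ≥0∞)⁻¹) ^ n := by
            refine le_trans (hDm (-(n:ℤ))) (le_of_eq ?_)
            rw [show (((-(n:ℤ)):ℤ):ℝ) = -((n:ℕ):ℝ) by push_cast; ring, ENNReal.rpow_neg,
              ENNReal.rpow_natCast, ← ENNReal.inv_pow]
    have htend := ENNReal.tendsto_pow_atTop_nhds_zero_of_lt_one
      (ENNReal.inv_lt_one.2 (by norm_num : (1:ℝ≥0∞) < 2))
    exact le_zero_iff.1 (ge_of_tendsto' htend hbound)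
  -- key pointwise description
  have hkey : ∀ x, ∃ j₀ : ℤ, ∀ j, F j x = if j = j₀ then f x else 0 := by
    intro x
    by_cases hfx : f x = 0
    · refine ⟨0, fun j => ?_⟩
      by_cases hx : x ∈ T j
      · rw [hF]; simp only [Set.indicator_of_mem hx, hfx, ite_self]
      · rw [hF]; simp only [Set.indicator_of_notMem hx, hfx, ite_self]
    by_cases hcov : ∃ j, x ∈ A j
    · obtain ⟨j₀, hj₀⟩ := hcov
      refine ⟨j₀, fun j => ?_⟩
      by_cases hjj : j = j₀
      · subst hjj
        rw [hF, if_pos rfl]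
        exact Set.indicator_of_mem (hTA _ _ hj₀) f
      · rw [hF, if_neg hjj]
        exact Set.indicator_of_notMem (hnotmem j₀ j (fun h => hjj h.symm) x (hTA _ _ hj₀)) f
    · push_neg at hcov
      have hxE : x ∈ E := ⟨hfx, hcov⟩
      refine ⟨0, fun j => ?_⟩
      by_cases hj : j = 0
      · subst hj
        rw [hF, if_pos rfl]
        refine Set.indicator_of_mem ?_ f
        rw [hT]
        simp only [if_pos rfl]
        exact Set.mem_union_right _ hxE
      · rw [hF, if_neg hj]
        refine Set.indicator_of_notMem ?_ f
        rw [hT]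
        simp only [if_neg hj]
        exact hcov j
  have hhassum : ∀ x, HasSum (fun j => F j x) (f x) := by
    intro x
    obtain ⟨j₀, hj⟩ := hkey x
    have : (fun j => F j x) = fun j => if j = j₀ then f x else 0 := funext hj
    rw [this]
    exact hasSum_ite_eq j₀ (f x)
  have hdisj : ∀ j k, j ≠ k → ∀ x, F j x * F k x = 0 := by
    intro j k hjk x
    by_cases hx : x ∈ T j
    · rw [hF]
      simp only [Set.indicator_of_notMem (hnotmem j k hjk x hx) f, mul_zero]
    · rw [hF]
      simp only [Set.indicator_of_notMem hx f, zero_mul]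
  -- norm bounds
  have hFae : ∀ j, F j =ᵐ[μ] (A j).indicator f := by
    intro j
    by_cases hj : j = 0
    · subst hj
      have heq : ∀ x, x ∉ E → F 0 x = (A 0).indicator f x := by
        intro x hx
        rw [hF]
        simp only [hT, if_pos rfl]
        by_cases hAx : x ∈ A 0
        · rw [Set.indicator_of_mem (Set.mem_union_left _ hAx), Set.indicator_of_mem hAx]
        · rw [Set.indicator_of_notMem hAx, Set.indicator_of_notMem ?_]
          rw [Set.mem_union]
          exact fun h => h.elim hAx hx
      refine ae_iff.2 (measure_mono_null ?_ hμE)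
      intro x hx
      by_contra hxE
      exact hx (heq x hxE)
    · have : F j = (A j).indicator f := by
        rw [hF]; simp only [hT, if_neg hj]
      rw [this]
  have hn1 : ∀ j, eLpNorm (F j) 1 μ ≤ ENNReal.ofReal (m j) * (2:ℝ≥0∞) ^ ((j:ℝ) + 1) := by
    intro j
    rw [eLpNorm_congr_ae (hFae j), eLpNorm_one_eq_lintegral_enorm]
    have hind : ∀ x, ((‖(A j).indicator f x‖₊ : ℝ≥0∞)) =
        (A j).indicator (fun x => (‖f x‖₊ : ℝ≥0∞)) x := by
      intro x
      by_cases hx : x ∈ A j <;>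
        simp [Set.indicator_of_mem, Set.indicator_of_notMem, hx]
    calc ∫⁻ x, (‖(A j).indicator f x‖₊ : ℝ≥0∞) ∂μ
        = ∫⁻ x in A j, (‖f x‖₊ : ℝ≥0∞) ∂μ := by
          simp_rw [hind]
          exact lintegral_indicator (hA_meas j) _
      _ ≤ ∫⁻ _ in A j, ENNReal.ofReal (m j) ∂μ := by
          refine setLIntegral_mono' (hA_meas j) (fun x hx => ?_)
          rw [← enorm_eq_nnnorm, ← ofReal_norm_eq_enorm]
          exact ENNReal.ofReal_le_ofReal hx.2
      _ = ENNReal.ofReal (m j) * μ (A j) := setLIntegral_const _ _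
      _ ≤ ENNReal.ofReal (m j) * (2:ℝ≥0∞) ^ ((j:ℝ) + 1) := by
          refine mul_le_mul_right ?_ _
          calc μ (A j) ≤ D (m (j+1)) := measure_mono (fun x hx => hx.1)
            _ ≤ (2:ℝ≥0∞) ^ (((j+1:ℤ)):ℝ) := hDm (j+1)
            _ = (2:ℝ≥0∞) ^ ((j:ℝ) + 1) := by norm_num
  have hninf : ∀ j, eLpNorm (F j) ∞ μ ≤ ENNReal.ofReal (m j) := by
    intro j
    rw [eLpNorm_congr_ae (hFae j), eLpNorm_exponent_top]
    refine eLpNormEssSup_le_of_ae_bound (C := m j) (Filter.Eventually.of_forall fun x => ?_)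
    by_cases hx : x ∈ A j
    · rw [Set.indicator_of_mem hx]
      exact hx.2
    · rw [Set.indicator_of_notMem hx, norm_zero]
      exact hm0 j
  have hW2 : ∀ x : ℝ, ENNReal.ofReal ((2:ℝ) ^ x) = (2:ℝ≥0∞) ^ x := by
    intro x
    rw [← ENNReal.ofReal_rpow_of_pos (by norm_num : (0:ℝ) < 2)]
    norm_num
  -- per-index claims
  have hCA : ∀ j : ℤ, ENNReal.ofReal ((2:ℝ) ^ ((j:ℝ) * (-(P - 1) / P))) * eLpNorm (F j) 1 μ
      ≤ 2 * ((2:ℝ≥0∞) ^ ((j:ℝ) * (1/P)) * ENNReal.ofReal (m j)) := by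
    intro j
    rw [hW2]
    calc (2:ℝ≥0∞) ^ ((j:ℝ) * (-(P - 1) / P)) * eLpNorm (F j) 1 μ
        ≤ (2:ℝ≥0∞) ^ ((j:ℝ) * (-(P - 1) / P)) *
            (ENNReal.ofReal (m j) * (2:ℝ≥0∞) ^ ((j:ℝ) + 1)) := mul_le_mul_right (hn1 j) _
      _ = ((2:ℝ≥0∞) ^ ((j:ℝ) * (-(P - 1) / P)) * (2:ℝ≥0∞) ^ ((j:ℝ) + 1)) *
            ENNReal.ofReal (m j) := by ring
      _ = 2 * ((2:ℝ≥0∞) ^ ((j:ℝ) * (1/P)) * ENNReal.ofReal (m j)) := by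
          rw [← ENNReal.rpow_add _ _ two_ne_zero ENNReal.ofNat_ne_top]
          have hexp : (j:ℝ) * (-(P - 1) / P) + ((j:ℝ) + 1) = 1 + (j:ℝ) * (1/P) := by
            field_simp
            ring
          rw [hexp, ENNReal.rpow_add _ _ two_ne_zero ENNReal.ofNat_ne_top,
            ENNReal.rpow_one, mul_assoc]
  have hCB : ∀ j : ℤ, ENNReal.ofReal ((2:ℝ) ^ ((j:ℝ) * (1/P))) * eLpNorm (F j) ∞ μ
      ≤ (2:ℝ≥0∞) ^ ((j:ℝ) * (1/P)) * ENNReal.ofReal (m j) := by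
    intro j
    rw [hW2]
    exact mul_le_mul_right (hninf j) _
  refine ⟨F, hF_meas, hhassum, hdisj, ?_⟩
  by_cases hrtop : r = ∞
  · -- r = ∞ case
    simp only [wSeq, lorentzNorm, if_pos hrtop, hDt]
    set L := ⨆ t : ℝ, ⨆ _ : 0 < t, ENNReal.ofReal t * D t ^ (1/P) with hLdef
    have hu : ∀ j : ℤ, (2:ℝ≥0∞) ^ ((j:ℝ) * (1/P)) * ENNReal.ofReal (m j) ≤ L := by
      intro j
      rcases eq_or_lt_of_le (hm0 j) with h0 | h0
      · rw [← h0]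
        simp
      · have hseq : ∀ n : ℕ, ENNReal.ofReal (m j - m j/((n:ℝ)+2)) *
            (2:ℝ≥0∞) ^ ((j:ℝ) * (1/P)) ≤ L := by
          intro n
          have hden : (1:ℝ) < (n:ℝ) + 2 := by
            have : (0:ℝ) ≤ (n:ℝ) := Nat.cast_nonneg n
            linarith
          have htn_pos : 0 < m j - m j/((n:ℝ)+2) := by
            have := div_lt_self h0 hden
            linarith
          have htn_lt : m j - m j/((n:ℝ)+2) < m j := by
            have : 0 < m j/((n:ℝ)+2) := by positivity
            linarith
          have hDlow : (2:ℝ≥0∞) ^ ((j:ℝ) * (1/P)) ≤ D (m j - m j/((n:ℝ)+2)) ^ (1/P) := by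
            rw [ENNReal.rpow_mul]
            exact ENNReal.rpow_le_rpow (hlt j _ htn_pos.le htn_lt).le (by positivity)
          calc ENNReal.ofReal (m j - m j/((n:ℝ)+2)) * (2:ℝ≥0∞) ^ ((j:ℝ) * (1/P))
              ≤ ENNReal.ofReal (m j - m j/((n:ℝ)+2)) * D (m j - m j/((n:ℝ)+2)) ^ (1/P) :=
                mul_le_mul_right hDlow _
            _ ≤ L := le_iSup₂ (f := fun (t:ℝ) (_ : 0 < t) => ENNReal.ofReal t * D t ^ (1/P))
                _ htn_pos
        have htend : Tendsto (fun n : ℕ => ENNReal.ofReal (m j - m j/((n:ℝ)+2)) *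
            (2:ℝ≥0∞) ^ ((j:ℝ) * (1/P))) atTop
            (𝓝 (ENNReal.ofReal (m j) * (2:ℝ≥0∞) ^ ((j:ℝ) * (1/P)))) := by
          refine ENNReal.Tendsto.mul_const ?_ (Or.inr (two_rpow_ne_top _))
          refine (ENNReal.continuous_ofReal.tendsto _).comp ?_
          have h1 : Tendsto (fun n : ℕ => ((n:ℝ)+2)) atTop atTop :=
            tendsto_atTop_add_const_right _ 2 tendsto_natCast_atTop_atTop
          have h2 : Tendsto (fun n : ℕ => m j/((n:ℝ)+2)) atTop (𝓝 0) := by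
            simpa [div_eq_mul_inv] using (tendsto_inv_atTop_zero.comp h1).const_mul (m j)
          simpa using tendsto_const_nhds.sub h2
        rw [mul_comm]
        exact le_of_tendsto' htend hseq
    have hb1 : (⨆ j : ℤ, ENNReal.ofReal ((2:ℝ) ^ ((j:ℝ) * (-(P - 1) / P))) *
        eLpNorm (F j) 1 μ) ≤ 2 * L :=
      iSup_le fun j => le_trans (hCA j) (mul_le_mul_right (hu j) 2)
    have hb2 : (⨆ j : ℤ, ENNReal.ofReal ((2:ℝ) ^ ((j:ℝ) * (1 / P))) *
        eLpNorm (F j) ∞ μ) ≤ L :=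
      iSup_le fun j => le_trans (hCB j) (hu j)
    calc (⨆ j : ℤ, ENNReal.ofReal ((2:ℝ) ^ ((j:ℝ) * (-(P - 1) / P))) * eLpNorm (F j) 1 μ)
          + (⨆ j : ℤ, ENNReal.ofReal ((2:ℝ) ^ ((j:ℝ) * (1 / P))) * eLpNorm (F j) ∞ μ)
        ≤ 2 * L + L := add_le_add hb1 hb2
      _ = 3 * L := by ring
      _ = 3 * C₁ * L := by rw [hC₁, if_pos hrtop, mul_one]
  · -- r < ∞ case
    simp only [wSeq, lorentzNorm, if_neg hrtop, hDt]
    set R := r.toReal with hRdef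
    have hR1 : 1 ≤ R := by simpa using ENNReal.toReal_mono hrtop hr
    have hRpos : 0 < R := lt_of_lt_of_le one_pos hR1
    have hRne : R ≠ 0 := hRpos.ne'
    set I := ∫⁻ t in Set.Ioi (0 : ℝ),
        (ENNReal.ofReal t * D t ^ (1 / P)) ^ R / ENNReal.ofReal t with hIdef
    set q : ℝ≥0∞ := (2:ℝ≥0∞) ^ (-(R / P)) with hqdef
    set W : ℤ → ℝ≥0∞ := fun k => (2:ℝ≥0∞) ^ ((k:ℝ) * (R/P)) with hWdef
    set b : ℤ → ℝ≥0∞ := fun k => ENNReal.ofReal (m k) ^ R with hbdef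
    set Ssum := ∑' j : ℤ, ((2:ℝ≥0∞) ^ ((j:ℝ) * (1/P)) * ENNReal.ofReal (m j)) ^ R with hSsumdef
    have hSW : Ssum = ∑' k : ℤ, W k * b k := by
      refine tsum_congr fun k => ?_
      rw [ENNReal.mul_rpow_of_nonneg _ _ hRpos.le]
      congr 1
      rw [← ENNReal.rpow_mul]
      congr 1
      ring
    have hWq : ∀ (k : ℤ) (i : ℕ), W (k - i) = W k * q ^ i := by
      intro k i
      rw [hWdef, hqdef]
      simp only []
      rw [← ENNReal.rpow_natCast ((2:ℝ≥0∞) ^ (-(R/P))) i, ← ENNReal.rpow_mul,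
        ← ENNReal.rpow_add _ _ two_ne_zero ENNReal.ofNat_ne_top]
      congr 1
      push_cast
      ring
    have hbmono : ∀ k, b (k+1) ≤ b k := fun k =>
      ENNReal.rpow_le_rpow (ENNReal.ofReal_le_ofReal (hmanti (by omega))) hRpos.le
    have hb0 : ∀ k : ℤ, Tendsto (fun i : ℕ => b (k + i)) atTop (𝓝 0) := by
      intro k
      have h1 : Tendsto (fun i : ℕ => ENNReal.ofReal (m (k + i))) atTop (𝓝 0) := by
        simpa [Function.comp_def] using (ENNReal.continuous_ofReal.tendsto 0).comp (hmtend k)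
      have h2 := Filter.Tendsto.ennrpow_const R h1
      rwa [ENNReal.zero_rpow_of_pos hRpos] at h2
    have habel : Ssum ≤ (1 - q)⁻¹ * ∑' k : ℤ, W k * (b k - b (k+1)) := by
      rw [hSW]; exact abel_tsum q W b hWq hbmono hb0
    have hper : ∀ k : ℤ, W k * (b k - b (k+1)) / ENNReal.ofReal R ≤
        ∫⁻ t in Set.Ioo (m (k+1)) (m k),
          (ENNReal.ofReal t * D t ^ (1 / P)) ^ R / ENNReal.ofReal t := by
      intro k
      by_cases hab : m (k+1) < m k
      case neg =>
        push_neg at hab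
        have hzero : b k - b (k+1) = 0 := tsub_eq_zero_iff_le.2
          (ENNReal.rpow_le_rpow (ENNReal.ofReal_le_ofReal hab) hRpos.le)
        simp [hzero]
      case pos =>
        have hIoo_sub : ∀ t ∈ Set.Ioo (m (k+1)) (m k), (0:ℝ) < t := fun t ht =>
          lt_of_le_of_lt (hm0 (k+1)) ht.1
        have hpt : ∀ t ∈ Set.Ioo (m (k+1)) (m k),
            ENNReal.ofReal t ^ (R - 1) * (((2:ℝ≥0∞) ^ ((k:ℝ))) ^ (1/P)) ^ R ≤
            (ENNReal.ofReal t * D t ^ (1 / P)) ^ R / ENNReal.ofReal t := by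
          intro t ht
          rw [← ennreal_div_helper (hIoo_sub t ht) _ hRpos.le]
          gcongr
          exact (hlt k t (hIoo_sub t ht).le ht.2).le
        have hflat : ∫⁻ t in Set.Ioo (m (k+1)) (m k), ENNReal.ofReal t ^ (R-1) =
            ENNReal.ofReal ((m k ^ R - m (k+1) ^ R)/R) := by
          have hcong : (∫⁻ t in Set.Ioo (m (k+1)) (m k), ENNReal.ofReal t ^ (R-1)) =
              ∫⁻ t in Set.Ioo (m (k+1)) (m k), ENNReal.ofReal (t ^ (R-1)) := by
            refine setLIntegral_congr_fun measurableSet_Ioo (fun t ht => ?_)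
            rw [ENNReal.ofReal_rpow_of_pos (hIoo_sub t ht)]
          rw [hcong]
          have hint : IntegrableOn (fun t : ℝ => t ^ (R-1)) (Set.Ioo (m (k+1)) (m k)) volume := by
            have h3 := intervalIntegral.intervalIntegrable_rpow (μ := volume) (r := R-1) (a := m (k+1)) (b := m k)
              (Or.inl (by linarith))
            rwa [intervalIntegrable_iff_integrableOn_Ioo_of_le hab.le] at h3
          rw [← ofReal_integral_eq_lintegral_ofReal hint
            ((ae_restrict_iff' measurableSet_Ioo).2
              (ae_of_all _ fun t ht => Real.rpow_nonneg (hIoo_sub t ht).le _))]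
          congr 1
          rw [← integral_Ioc_eq_integral_Ioo, ← intervalIntegral.integral_of_le hab.le,
            integral_rpow (Or.inl (by linarith : (-1:ℝ) < R - 1)), sub_add_cancel]
        have hid : W k * (b k - b (k+1)) / ENNReal.ofReal R =
            ENNReal.ofReal ((m k ^ R - m (k+1) ^ R)/R) *
              (((2:ℝ≥0∞) ^ ((k:ℝ))) ^ (1/P)) ^ R := by
          have hC : (((2:ℝ≥0∞) ^ ((k:ℝ))) ^ (1/P)) ^ R = W k := by
            rw [← ENNReal.rpow_mul, ← ENNReal.rpow_mul]
            congr 1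
            ring
          have hbsub : b k - b (k+1) = ENNReal.ofReal (m k ^ R - m (k+1) ^ R) := by
            rw [hbdef]
            simp only []
            rw [ENNReal.ofReal_rpow_of_nonneg (hm0 k) hRpos.le,
              ENNReal.ofReal_rpow_of_nonneg (hm0 (k+1)) hRpos.le,
              ← ENNReal.ofReal_sub _ (Real.rpow_nonneg (hm0 (k+1)) R)]
          rw [hC, hbsub, ENNReal.ofReal_div_of_pos hRpos, div_eq_mul_inv, div_eq_mul_inv]
          ring
        calc W k * (b k - b (k+1)) / ENNReal.ofReal R
            = (∫⁻ t in Set.Ioo (m (k+1)) (m k), ENNReal.ofReal t ^ (R-1)) *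
                (((2:ℝ≥0∞) ^ ((k:ℝ))) ^ (1/P)) ^ R := by rw [hid, hflat]
          _ = ∫⁻ t in Set.Ioo (m (k+1)) (m k),
                ENNReal.ofReal t ^ (R-1) * (((2:ℝ≥0∞) ^ ((k:ℝ))) ^ (1/P)) ^ R :=
              (lintegral_mul_const _ (ENNReal.measurable_ofReal.pow_const _)).symm
          _ ≤ _ := setLIntegral_mono' measurableSet_Ioo hpt
    have hpair : Pairwise (Function.onFun Disjoint fun k : ℤ => Set.Ioo (m (k+1)) (m k)) := by
      intro j k hjk
      simp only [Function.onFun]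
      rw [Set.disjoint_left]
      intro t htj htk
      rcases lt_or_gt_of_ne hjk with h | h
      · have := hmanti (show j + 1 ≤ k by omega)
        exact absurd (lt_of_lt_of_le htk.2 this) (not_lt.2 htj.1.le)
      · have := hmanti (show k + 1 ≤ j by omega)
        exact absurd (lt_of_lt_of_le htj.2 this) (not_lt.2 htk.1.le)
    have hsum_le : (∑' k : ℤ, W k * (b k - b (k+1))) / ENNReal.ofReal R ≤ I := by
      calc (∑' k : ℤ, W k * (b k - b (k+1))) / ENNReal.ofReal R
          = ∑' k : ℤ, W k * (b k - b (k+1)) / ENNReal.ofReal R := by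
            simp_rw [div_eq_mul_inv]
            rw [ENNReal.tsum_mul_right]
        _ ≤ ∑' k : ℤ, ∫⁻ t in Set.Ioo (m (k+1)) (m k),
              (ENNReal.ofReal t * D t ^ (1 / P)) ^ R / ENNReal.ofReal t :=
            ENNReal.tsum_le_tsum hper
        _ = ∫⁻ t in ⋃ k : ℤ, Set.Ioo (m (k+1)) (m k),
              (ENNReal.ofReal t * D t ^ (1 / P)) ^ R / ENNReal.ofReal t :=
            (lintegral_iUnion (fun k => measurableSet_Ioo) hpair _).symm
        _ ≤ I := by
            refine lintegral_mono_set ?_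
            intro t ht
            obtain ⟨k, hk⟩ := Set.mem_iUnion.1 ht
            exact lt_of_le_of_lt (hm0 (k+1)) hk.1
    have hofR0 : ENNReal.ofReal R ≠ 0 := by
      simp only [ne_eq, ENNReal.ofReal_eq_zero, not_le]
      linarith
    have hS_le : Ssum ≤ (1 - q)⁻¹ * (I * ENNReal.ofReal R) := by
      refine le_trans habel (mul_le_mul_right ?_ _)
      exact (ENNReal.div_le_iff_le_mul (Or.inl hofR0)
        (Or.inl ENNReal.ofReal_ne_top)).1 hsum_le
    have hb1 : (∑' j : ℤ,
        (ENNReal.ofReal ((2:ℝ) ^ ((j:ℝ) * (-(P - 1) / P))) * eLpNorm (F j) 1 μ) ^ R) ^ (1/R)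
        ≤ 2 * Ssum ^ (1/R) := by
      have h1 : ∀ j : ℤ,
          (ENNReal.ofReal ((2:ℝ) ^ ((j:ℝ) * (-(P - 1) / P))) * eLpNorm (F j) 1 μ) ^ R ≤
          (2:ℝ≥0∞) ^ R * (((2:ℝ≥0∞) ^ ((j:ℝ) * (1/P)) * ENNReal.ofReal (m j)) ^ R) := by
        intro j
        rw [← ENNReal.mul_rpow_of_nonneg _ _ hRpos.le]
        exact ENNReal.rpow_le_rpow (hCA j) hRpos.le
      calc (∑' j : ℤ,
          (ENNReal.ofReal ((2:ℝ) ^ ((j:ℝ) * (-(P - 1) / P))) * eLpNorm (F j) 1 μ) ^ R) ^ (1/R)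
          ≤ (∑' j : ℤ, (2:ℝ≥0∞) ^ R *
              (((2:ℝ≥0∞) ^ ((j:ℝ) * (1/P)) * ENNReal.ofReal (m j)) ^ R)) ^ (1/R) :=
            ENNReal.rpow_le_rpow (ENNReal.tsum_le_tsum h1) (by positivity)
        _ = ((2:ℝ≥0∞) ^ R * Ssum) ^ (1/R) := by rw [ENNReal.tsum_mul_left]
        _ = 2 * Ssum ^ (1/R) := by
            rw [ENNReal.mul_rpow_of_nonneg _ _ (by positivity), ← ENNReal.rpow_mul,
              mul_one_div, div_self hRne, ENNReal.rpow_one]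
    have hb2 : (∑' j : ℤ,
        (ENNReal.ofReal ((2:ℝ) ^ ((j:ℝ) * (1 / P))) * eLpNorm (F j) ∞ μ) ^ R) ^ (1/R)
        ≤ Ssum ^ (1/R) :=
      ENNReal.rpow_le_rpow (ENNReal.tsum_le_tsum fun j =>
        ENNReal.rpow_le_rpow (hCB j) hRpos.le) (by positivity)
    have hC₁eq : C₁ = ((1 - q)⁻¹ * ENNReal.ofReal R) ^ (1/R) := by
      rw [hC₁, if_neg hrtop, div_eq_mul_inv, mul_comm]
    have hfinal : Ssum ^ (1/R) ≤ C₁ * I ^ (1/R) := by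
      calc Ssum ^ (1/R) ≤ ((1 - q)⁻¹ * (I * ENNReal.ofReal R)) ^ (1/R) :=
            ENNReal.rpow_le_rpow hS_le (by positivity)
        _ = C₁ * I ^ (1/R) := by
            rw [hC₁eq, show (1-q)⁻¹ * (I * ENNReal.ofReal R)
                = ((1-q)⁻¹ * ENNReal.ofReal R) * I by ring,
              ENNReal.mul_rpow_of_nonneg _ _ (by positivity)]
    calc (∑' j : ℤ,
        (ENNReal.ofReal ((2:ℝ) ^ ((j:ℝ) * (-(P - 1) / P))) * eLpNorm (F j) 1 μ) ^ R) ^ (1/R) +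
        (∑' j : ℤ,
        (ENNReal.ofReal ((2:ℝ) ^ ((j:ℝ) * (1 / P))) * eLpNorm (F j) ∞ μ) ^ R) ^ (1/R)
        ≤ 2 * Ssum ^ (1/R) + Ssum ^ (1/R) := add_le_add hb1 hb2
      _ = 3 * Ssum ^ (1/R) := by ring
      _ ≤ 3 * (C₁ * I ^ (1/R)) := mul_le_mul_right hfinal 3
      _ = 3 * C₁ * I ^ (1/R) := by ring
end

section
/- Let n ≥ 1, α, β > 0, q₀, q₁ ∈ [1, ∞] with q₀ ≠ q₁, θ = α/(α+β) ∈ (0,1), 1/p = (1-θ)/q₀ + θ/q₁, and let r, r₀, r₁ ∈ [1, ∞]. Suppose there exists a constant C such that for every sequence (g_j)_{j∈ℤ} of measurable functions on ℝⁿ and every measurable f such that Σ_{j∈ℤ} g_j(x) converges absolutely to f(x) for a.e. x, one has ‖f‖_{L^{p,r}} ≤ C · ( Σ_{j∈ℤ} (2^{jα}‖g_j‖_{L^{q₀}})^{r₀} )^{(1-θ)/r₀} · ( Σ_{j∈ℤ} (2^{-jβ}‖g_j‖_{L^{q₁}})^{r₁} )^{θ/r₁} (with sup modifications for infinite exponents).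 Then necessarily 1/r ≤ (1-θ)/r₀ + θ/r₁. -/
open MeasureTheory ENNReal

lemma wSeq_eq_card (ρ s : ℝ) (r : ℝ≥0∞) (hr : 1 ≤ r) (a : ℤ → ℝ≥0∞) (L : ℕ) (hL : 1 ≤ L)
    (h1 : ∀ j ∈ Finset.Icc (1 : ℤ) L, ENNReal.ofReal (ρ ^ ((j : ℝ) * s)) * a j = 1)
    (h0 : ∀ j ∉ Finset.Icc (1 : ℤ) L, a j = 0) :
    wSeq ρ s r a = (L : ℝ≥0∞) ^ (r⁻¹).toReal := by
  have hcard : (Finset.Icc (1 : ℤ) L).card = L := by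
    rw [Int.card_Icc]; simp
  unfold wSeq
  by_cases hrt : r = ∞
  · simp only [hrt, if_true, ENNReal.inv_top, ENNReal.toReal_zero, ENNReal.rpow_zero]
    apply le_antisymm
    · apply iSup_le
      intro j
      by_cases hj : j ∈ Finset.Icc (1 : ℤ) L
      · exact (h1 j hj).le
      · rw [h0 j hj, mul_zero]; exact zero_le_one
    · have h1' : ENNReal.ofReal (ρ ^ ((1 : ℤ) * s : ℝ)) * a 1 = 1 := by
        apply h1; simp [Finset.mem_Icc]; exact_mod_cast hL
      calc (1 : ℝ≥0∞) = ENNReal.ofReal (ρ ^ (((1:ℤ) : ℝ) * s)) * a 1 := by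
            rw [← h1']
        _ ≤ _ := le_iSup (fun j : ℤ => ENNReal.ofReal (ρ ^ ((j : ℝ) * s)) * a j) 1
  · have hr0 : r ≠ 0 := by positivity
    have hrt0 : (0:ℝ) < r.toReal := ENNReal.toReal_pos hr0 hrt
    simp only [hrt, if_false]
    rw [tsum_eq_sum (s := Finset.Icc (1 : ℤ) L) (by
      intro j hj
      rw [h0 j hj, mul_zero, ENNReal.zero_rpow_of_pos hrt0])]
    rw [Finset.sum_congr rfl (fun j hj => by rw [h1 j hj, ENNReal.one_rpow])]
    rw [Finset.sum_const, hcard, nsmul_eq_mul, mul_one]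
    congr 1
    rw [ENNReal.toReal_inv]
    exact one_div _

section constr
variable {n : ℕ} (hn : 0 < n)

/-- The box with first coordinate in `Ioo lo (lo+len)`, other coords in `(0,1)`. -/
def myBox (hn : 0 < n) (lo len : ℝ) : Set (Fin n → ℝ) :=
  Set.univ.pi fun i : Fin n => if i = ⟨0, hn⟩ then Set.Ioo lo (lo + len) else Set.Ioo 0 1

lemma myBox_meas (lo len : ℝ) : MeasurableSet (myBox hn lo len) := by
  apply MeasurableSet.univ_pi
  intro i
  by_cases h : i = ⟨0, hn⟩ <;> simp [h, measurableSet_Ioo]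

lemma myBox_vol (lo len : ℝ) (hlen : 0 ≤ len) :
    volume (myBox hn lo len) = ENNReal.ofReal len := by
  rw [myBox, volume_pi_pi]
  rw [Finset.prod_eq_single (⟨0, hn⟩ : Fin n)]
  · simp [Real.volume_Ioo]
  · intro b _ hb; simp [hb, Real.volume_Ioo]
  · intro h; exact absurd (Finset.mem_univ _) h

lemma myBox_disj {lo₁ len₁ lo₂ len₂ : ℝ} (h : lo₁ + len₁ ≤ lo₂) :
    Disjoint (myBox hn lo₁ len₁) (myBox hn lo₂ len₂) := by
  rw [Set.disjoint_left]
  intro x hx₁ hx₂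
  have h₁ := hx₁ ⟨0, hn⟩ (Set.mem_univ _)
  have h₂ := hx₂ ⟨0, hn⟩ (Set.mem_univ _)
  simp only [if_pos rfl] at h₁ h₂
  exact absurd (h₁.2.trans_le (h.trans h₂.1.le)) (lt_irrefl _)

end constr

lemma lorentz_lb {X : Type*} [MeasurableSpace X] (μ : Measure X) (f : X → ℂ)
    (up ρ : ℝ) (hup : 0 ≤ up) (hρ : 0 < ρ) (L : ℕ)
    (aa mm : ℤ → ℝ) (lam : ℝ) (hlam : 0 < lam) (hlam1 : lam < 1)
    (haa : ∀ j ∈ Finset.Icc (1 : ℤ) L, 0 < aa j)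
    (hmm : ∀ j ∈ Finset.Icc (1 : ℤ) L, 0 < mm j)
    (hval : ∀ j ∈ Finset.Icc (1 : ℤ) L, aa j * mm j ^ up = 1)
    (hdisj : Set.PairwiseDisjoint (Finset.Icc (1 : ℤ) L : Set ℤ)
      (fun j => Set.Ioo (lam * aa j) (aa j)))
    (hmeas : ∀ j ∈ Finset.Icc (1 : ℤ) L, ∀ t ∈ Set.Ioo (lam * aa j) (aa j),
      ENNReal.ofReal (mm j) ≤ μ {x | t < ‖f x‖}) :
    ENNReal.ofReal (lam ^ ρ * (1 - lam)) * L ≤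
      ∫⁻ t in Set.Ioi (0 : ℝ),
        (ENNReal.ofReal t * μ {x | t < ‖f x‖} ^ up) ^ ρ / ENNReal.ofReal t := by
  classical
  set F : ℝ → ℝ≥0∞ := fun t => (ENNReal.ofReal t * μ {x | t < ‖f x‖} ^ up) ^ ρ / ENNReal.ofReal t
    with hF
  have key : ∀ j ∈ Finset.Icc (1 : ℤ) L,
      ENNReal.ofReal (lam ^ ρ * (1 - lam)) ≤
        ∫⁻ t in Set.Ioo (lam * aa j) (aa j), F t ∂(volume : Measure ℝ) := by
    intro j hj
    have haj := haa j hj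
    have hmj := hmm j hj
    have hconst : ∀ t ∈ Set.Ioo (lam * aa j) (aa j),
        ENNReal.ofReal ((lam * aa j) ^ ρ * mm j ^ (up * ρ) / aa j) ≤ F t := by
      intro t ht
      have ht0 : 0 < t := lt_trans (by positivity) ht.1
      have h1 : ENNReal.ofReal (mm j) ≤ μ {x | t < ‖f x‖} := hmeas j hj t ht
      have step1 : (ENNReal.ofReal (lam * aa j) * ENNReal.ofReal (mm j) ^ up) ^ ρ /
          ENNReal.ofReal (aa j) ≤ F t := by
        apply ENNReal.div_le_div
        · apply ENNReal.rpow_le_rpow _ hρ.le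
          exact mul_le_mul' (ENNReal.ofReal_le_ofReal ht.1.le)
            (ENNReal.rpow_le_rpow h1 hup)
        · exact ENNReal.ofReal_le_ofReal ht.2.le
      refine le_trans (le_of_eq ?_) step1
      rw [ENNReal.ofReal_rpow_of_pos hmj, ← ENNReal.ofReal_mul (by positivity),
        ENNReal.ofReal_rpow_of_pos (by positivity),
        ← ENNReal.ofReal_div_of_pos haj]
      congr 1
      rw [Real.mul_rpow (by positivity) (by positivity), Real.rpow_mul hmj.le,
        Real.mul_rpow (by positivity) (by positivity),
        Real.mul_rpow (by positivity) (by positivity)]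
    calc ENNReal.ofReal (lam ^ ρ * (1 - lam))
        = ENNReal.ofReal ((lam * aa j) ^ ρ * mm j ^ (up * ρ) / aa j) *
            volume (Set.Ioo (lam * aa j) (aa j)) := by
          rw [Real.volume_Ioo, ← ENNReal.ofReal_mul (by positivity)]
          congr 1
          have h1 : mm j ^ (up * ρ) = (mm j ^ up) ^ ρ := Real.rpow_mul hmj.le up ρ
          have h3 : mm j ^ up = (aa j)⁻¹ := by
            have h2 : aa j * mm j ^ up = 1 := hval j hj
            field_simp
            linear_combination h2
          rw [h1, h3, ← Real.mul_rpow (by positivity) (by positivity)]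
          have e1 : lam * aa j * (aa j)⁻¹ = lam := by field_simp
          rw [e1]
          field_simp
      _ ≤ ∫⁻ t in Set.Ioo (lam * aa j) (aa j), F t ∂volume := by
          rw [← setLIntegral_const]
          exact setLIntegral_mono' measurableSet_Ioo hconst
  -- sum the intervals
  have hmeasI : ∀ j ∈ Finset.Icc (1 : ℤ) L,
      MeasurableSet (Set.Ioo (lam * aa j) (aa j)) := fun j _ => measurableSet_Ioo
  have hsub : (⋃ j ∈ Finset.Icc (1 : ℤ) L, Set.Ioo (lam * aa j) (aa j)) ⊆ Set.Ioi (0 : ℝ) := by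
    intro t ht
    simp only [Set.mem_iUnion] at ht
    obtain ⟨j, hj, htj⟩ := ht
    exact lt_trans (mul_pos hlam (haa j hj)) htj.1
  calc ENNReal.ofReal (lam ^ ρ * (1 - lam)) * L
      = ∑ j ∈ Finset.Icc (1 : ℤ) L, ENNReal.ofReal (lam ^ ρ * (1 - lam)) := by
        rw [Finset.sum_const, nsmul_eq_mul, mul_comm]
        congr 1
        rw [Int.card_Icc]
        simp
    _ ≤ ∑ j ∈ Finset.Icc (1 : ℤ) L, ∫⁻ t in Set.Ioo (lam * aa j) (aa j), F t ∂volume :=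
        Finset.sum_le_sum key
    _ = ∫⁻ t in ⋃ j ∈ Finset.Icc (1 : ℤ) L, Set.Ioo (lam * aa j) (aa j), F t ∂volume :=
        (lintegral_biUnion_finset hdisj hmeasI F).symm
    _ ≤ ∫⁻ t in Set.Ioi (0 : ℝ), F t ∂volume := lintegral_mono_set hsub

set_option maxHeartbeats 2000000 in
/-- sharpness (part 3) of Theorem 3 / optimality after Theorem 5): if the
refined inequality
`‖f‖_{L^{p,r}} ≤ C ‖f‖_{Ḃ^{α,q₀}_{r₀}}^{1-θ} ‖f‖_{Ḃ^{-β,q₁}_{r₁}}^θ`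
holds (with a finite constant `C`) for every a.e. absolutely convergent decomposition
`f = ∑_{j∈ℤ} g_j` on `ℝⁿ`, then necessarily `1/r ≤ (1-θ)/r₀ + θ/r₁`. -/
theorem statement16 (n : ℕ) (hn : 1 ≤ n) (α β : ℝ) (hα : 0 < α) (hβ : 0 < β)
    (q₀ q₁ : ℝ≥0∞) (hq₀ : 1 ≤ q₀) (hq₁ : 1 ≤ q₁) (hq : q₀ ≠ q₁)
    (θ : ℝ) (hθ : θ = α / (α + β))
    (p : ℝ≥0∞) (hp : p⁻¹ = ENNReal.ofReal (1 - θ) * q₀⁻¹ + ENNReal.ofReal θ * q₁⁻¹)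
    (r r₀ r₁ : ℝ≥0∞) (hr : 1 ≤ r) (hr₀ : 1 ≤ r₀) (hr₁ : 1 ≤ r₁)
    (C : ℝ≥0∞) (hC : C ≠ ∞)
    (H : ∀ (g : ℤ → (Fin n → ℝ) → ℂ) (f : (Fin n → ℝ) → ℂ),
      (∀ j, Measurable (g j)) → Measurable f →
      (∀ᵐ x ∂(volume : Measure (Fin n → ℝ)),
        (Summable fun j => ‖g j x‖) ∧ HasSum (fun j => g j x) (f x)) →
      lorentzNorm volume p r f ≤
        C * besovNorm volume α q₀ r₀ g ^ (1 - θ) * besovNorm volume (-β) q₁ r₁ g ^ θ) :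
    r⁻¹ ≤ ENNReal.ofReal (1 - θ) * r₀⁻¹ + ENNReal.ofReal θ * r₁⁻¹ := by
  classical
  by_cases hrtop : r = ∞
  · simp [hrtop]
  have hn0 : 0 < n := hn
  have hαβ : 0 < α + β := by linarith
  have hθ0 : 0 < θ := by rw [hθ]; positivity
  have hθ1 : θ < 1 := by rw [hθ, div_lt_one hαβ]; linarith
  have h1θ0 : 0 < 1 - θ := by linarith
  have hθαβ : θ * (α + β) = α := by rw [hθ]; field_simp
  -- q facts
  have hq₀0 : q₀ ≠ 0 := (zero_lt_one.trans_le hq₀).ne'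
  have hq₁0 : q₁ ≠ 0 := (zero_lt_one.trans_le hq₁).ne'
  have hq₀it : q₀⁻¹ ≠ ∞ := ENNReal.inv_ne_top.2 hq₀0
  have hq₁it : q₁⁻¹ ≠ ∞ := ENNReal.inv_ne_top.2 hq₁0
  set u₀ : ℝ := (q₀⁻¹).toReal with hu₀
  set u₁ : ℝ := (q₁⁻¹).toReal with hu₁
  have hu₀0 : 0 ≤ u₀ := ENNReal.toReal_nonneg
  have hu₁0 : 0 ≤ u₁ := ENNReal.toReal_nonneg
  have hune : u₀ ≠ u₁ := by
    intro h
    have h' := (ENNReal.toReal_eq_toReal_iff' hq₀it hq₁it).1 h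
    have h'' : q₀⁻¹⁻¹ = q₁⁻¹⁻¹ := by rw [h']
    exact hq (by simpa using h'')
  have hδ : u₀ - u₁ ≠ 0 := sub_ne_zero.2 hune
  set c : ℝ := (α + β) / (u₀ - u₁) with hc
  have hcδ : c * (u₀ - u₁) = α + β := div_mul_cancel₀ _ hδ
  set d : ℝ := c * u₀ - α with hd
  have hd0 : d ≠ 0 := by
    rcases lt_or_gt_of_ne hδ with h | h
    · have hc0 : c < 0 := div_neg_of_pos_of_neg hαβ (by linarith)
      have h2 : c * u₀ ≤ 0 := mul_nonpos_of_nonpos_of_nonneg hc0.le hu₀0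
      have : d < 0 := by rw [hd]; linarith
      exact this.ne
    · have hc0 : 0 < c := div_pos hαβ (by linarith)
      have h2 : α + β ≤ c * u₀ := by
        calc α + β = c * (u₀ - u₁) := hcδ.symm
          _ ≤ c * u₀ := mul_le_mul_of_nonneg_left (by linarith) hc0.le
      have : 0 < d := by rw [hd]; linarith
      exact this.ne'
  -- p facts
  have ht1 : ENNReal.ofReal (1 - θ) * q₀⁻¹ ≠ ∞ := ENNReal.mul_ne_top ENNReal.ofReal_ne_top hq₀it
  have ht2 : ENNReal.ofReal θ * q₁⁻¹ ≠ ∞ := ENNReal.mul_ne_top ENNReal.ofReal_ne_top hq₁it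
  set up : ℝ := (1 - θ) * u₀ + θ * u₁ with hupd
  have hup0 : 0 ≤ up := by positivity
  have hupeq : 1 / p.toReal = up := by
    rw [one_div, ← ENNReal.toReal_inv, hp, ENNReal.toReal_add ht1 ht2,
      ENNReal.toReal_mul, ENNReal.toReal_mul, ENNReal.toReal_ofReal h1θ0.le,
      ENNReal.toReal_ofReal hθ0.le, hupd, hu₀, hu₁]
  -- exponent identities
  have hdup : d - c * up = 0 := by
    rw [hd, hupd]; linear_combination θ * hcδ + hθαβ
  have hαeq : α + (d - c * u₀) = 0 := by rw [hd]; ring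
  have hβeq : -β + (d - c * u₁) = 0 := by rw [hd]; linear_combination hcδ
  -- r facts
  have hr0 : r ≠ 0 := (zero_lt_one.trans_le hr).ne'
  have hr₀0 : r₀ ≠ 0 := (zero_lt_one.trans_le hr₀).ne'
  have hr₁0 : r₁ ≠ 0 := (zero_lt_one.trans_le hr₁).ne'
  have hρpos : 0 < r.toReal := ENNReal.toReal_pos hr0 hrtop
  set ρ : ℝ := r.toReal with hρ
  set x₀ : ℝ := (r₀⁻¹).toReal with hx₀
  set x₁ : ℝ := (r₁⁻¹).toReal with hx₁
  have hx₀0 : 0 ≤ x₀ := ENNReal.toReal_nonneg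
  have hx₁0 : 0 ≤ x₁ := ENNReal.toReal_nonneg
  set ee : ℝ := (1 - θ) * x₀ + θ * x₁ with heed
  have hee0 : 0 ≤ ee := by positivity
  -- the key constant
  set lam : ℝ := 2 ^ (-|d|) with hlamd
  have hlam0 : 0 < lam := Real.rpow_pos_of_pos two_pos _
  have hlam1 : lam < 1 := by
    rw [hlamd]
    exact Real.rpow_lt_one_of_one_lt_of_neg one_lt_two (neg_lt_zero.2 (abs_pos.2 hd0))
  set ε₀ : ℝ := lam ^ ρ * (1 - lam) with hε₀d
  have hε₀pos : 0 < ε₀ := by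
    rw [hε₀d]
    have := Real.rpow_pos_of_pos hlam0 ρ
    nlinarith
  -- main inequality for each L
  have main : ∀ L : ℕ, 1 ≤ L →
      ENNReal.ofReal (ε₀ ^ ρ⁻¹) * (L : ℝ≥0∞) ^ ρ⁻¹ ≤ C * (L : ℝ≥0∞) ^ ee := by
    intro L hL
    have hL0' : ((L : ℕ) : ℝ≥0∞) ≠ 0 := Nat.cast_ne_zero.2 (by omega)
    have hLtop' : ((L : ℕ) : ℝ≥0∞) ≠ ∞ := ENNReal.natCast_ne_top L
    set K : ℝ := 2 ^ (|c| * L) with hKdef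
    have hK0 : 0 < K := Real.rpow_pos_of_pos two_pos _
    set mm : ℤ → ℝ := fun j => 2 ^ (-((j : ℝ) * c)) with hmmd
    set aa : ℤ → ℝ := fun j => 2 ^ ((j : ℝ) * d) with haad
    have hmm0 : ∀ j, 0 < mm j := fun j => Real.rpow_pos_of_pos two_pos _
    have haa0 : ∀ j, 0 < aa j := fun j => Real.rpow_pos_of_pos two_pos _
    have hpow2 : ∀ (u : ℝ) (j : ℤ), aa j * mm j ^ u = 2 ^ ((j : ℝ) * (d - c * u)) := by
      intro u j
      simp only [hmmd, haad]
      rw [← Real.rpow_mul (by norm_num : (0:ℝ) ≤ 2), ← Real.rpow_add two_pos]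
      congr 1
      ring
    have hmmK : ∀ j ∈ Finset.Icc (1 : ℤ) (L : ℤ), mm j ≤ K := by
      intro j hj
      rw [Finset.mem_Icc] at hj
      simp only [hmmd, hKdef]
      rw [Real.rpow_le_rpow_left_iff one_lt_two]
      have h1 : (1:ℝ) ≤ (j:ℝ) := by exact_mod_cast hj.1
      have h2 : (j:ℝ) ≤ (L:ℝ) := by exact_mod_cast hj.2
      calc -((j:ℝ) * c) ≤ |(j:ℝ) * c| := neg_le_abs _
        _ = (j:ℝ) * |c| := by rw [abs_mul, abs_of_pos (by linarith : (0:ℝ) < (j:ℝ))]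
        _ ≤ (L:ℝ) * |c| := mul_le_mul_of_nonneg_right h2 (abs_nonneg c)
        _ = |c| * L := by ring
    set E : ℤ → Set (Fin n → ℝ) := fun j => myBox hn0 ((j : ℝ) * K) (mm j) with hEd
    have hEmeas : ∀ j, MeasurableSet (E j) := fun j => myBox_meas hn0 _ _
    have hEvol : ∀ j, volume (E j) = ENNReal.ofReal (mm j) := fun j =>
      myBox_vol hn0 _ _ (hmm0 j).le
    have hEdisj : ∀ j ∈ Finset.Icc (1:ℤ) (L:ℤ), ∀ k ∈ Finset.Icc (1:ℤ) (L:ℤ), j ≠ k →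
        Disjoint (E j) (E k) := by
      have key : ∀ j k : ℤ, j ∈ Finset.Icc (1:ℤ) (L:ℤ) → j < k → Disjoint (E j) (E k) := by
        intro j k hj hjk
        apply myBox_disj
        have h1 : mm j ≤ K := hmmK j hj
        have h2 : (j:ℝ) + 1 ≤ (k:ℝ) := by exact_mod_cast hjk
        have h3 : ((j:ℝ) + 1) * K ≤ (k:ℝ) * K := mul_le_mul_of_nonneg_right h2 hK0.le
        nlinarith
      intro j hj k hk hjk
      rcases lt_or_gt_of_ne hjk with h | h
      · exact key j k hj h
      · exact (key k j hk h).symm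
    set g : ℤ → (Fin n → ℝ) → ℂ := fun j =>
      if j ∈ Finset.Icc (1 : ℤ) (L : ℤ) then (E j).indicator (fun _ => ((aa j : ℝ) : ℂ)) else 0
      with hgd
    set f : (Fin n → ℝ) → ℂ := fun x => ∑ j ∈ Finset.Icc (1 : ℤ) (L : ℤ), g j x with hfd
    have hgmeas : ∀ j, Measurable (g j) := by
      intro j
      simp only [hgd]
      split
      · exact measurable_const.indicator (hEmeas j)
      · exact measurable_const
    have hfmeas : Measurable f := by
      simp only [hfd]
      exact Finset.measurable_sum _ (fun j _ => hgmeas j)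
    have hg0 : ∀ j ∉ Finset.Icc (1:ℤ) (L:ℤ), g j = 0 := by
      intro j hj
      simp only [hgd, if_neg hj]
    have hsum : ∀ x, (Summable fun j => ‖g j x‖) ∧ HasSum (fun j => g j x) (f x) := by
      intro x
      have h0 : ∀ j ∉ Finset.Icc (1:ℤ) (L:ℤ), g j x = 0 := by
        intro j hj
        rw [hg0 j hj]
        rfl
      constructor
      · apply summable_of_ne_finset_zero (s := Finset.Icc (1:ℤ) (L:ℤ))
        intro j hj
        rw [h0 j hj, norm_zero]
      · exact hasSum_sum_of_ne_finset_zero h0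
    have hfval : ∀ j ∈ Finset.Icc (1:ℤ) (L:ℤ), ∀ x ∈ E j, f x = ((aa j : ℝ) : ℂ) := by
      intro j hj x hx
      have hfx : f x = g j x := by
        refine Finset.sum_eq_single_of_mem j hj ?_
        intro k hk hkj
        have hxk : x ∉ E k := Set.disjoint_left.1 (hEdisj j hj k hk (Ne.symm hkj)) hx
        simp only [hgd, if_pos hk]
        exact Set.indicator_of_notMem hxk _
      rw [hfx]
      simp only [hgd, if_pos hj]
      exact Set.indicator_of_mem hx _
    have hexp : ∀ q : ℝ≥0∞, 1 / q.toReal = (q⁻¹).toReal := by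
      intro q
      rw [ENNReal.toReal_inv, one_div]
    have hgnorm : ∀ (q : ℝ≥0∞), q ≠ 0 → ∀ j ∈ Finset.Icc (1:ℤ) (L:ℤ),
        eLpNorm (g j) q volume = ENNReal.ofReal (aa j * mm j ^ (q⁻¹).toReal) := by
      intro q hq0 j hj
      simp only [hgd, if_pos hj]
      rw [eLpNorm_indicator_const' (hEmeas j)
        (by rw [hEvol j]; exact (ENNReal.ofReal_pos.2 (hmm0 j)).ne') hq0]
      rw [hEvol j, hexp q, ENNReal.ofReal_rpow_of_pos (hmm0 j), ← ofReal_norm_eq_enorm,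
        Complex.norm_real, Real.norm_eq_abs, abs_of_pos (haa0 j),
        ← ENNReal.ofReal_mul (haa0 j).le]
    have hBesov : ∀ (s : ℝ) (q rr : ℝ≥0∞), q ≠ 0 → 1 ≤ rr →
        (s + (d - c * (q⁻¹).toReal) = 0) →
        wSeq 2 s rr (fun j => eLpNorm (g j) q volume) = (L : ℝ≥0∞) ^ (rr⁻¹).toReal := by
      intro s q rr hq0 hrr hs
      refine wSeq_eq_card 2 s rr hrr _ L hL ?_ ?_
      · intro j hj
        rw [hgnorm q hq0 j hj, ← ENNReal.ofReal_mul (by positivity), hpow2 ((q⁻¹).toReal) j,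
          ← Real.rpow_add two_pos]
        have hz : (j:ℝ) * s + (j:ℝ) * (d - c * (q⁻¹).toReal) = 0 := by
          rw [← mul_add, hs, mul_zero]
        rw [hz, Real.rpow_zero, ENNReal.ofReal_one]
      · intro j hj
        rw [hg0 j hj]
        exact eLpNorm_zero
    have hB0 : besovNorm volume α q₀ r₀ g = (L : ℝ≥0∞) ^ (r₀⁻¹).toReal := by
      unfold besovNorm
      exact hBesov α q₀ r₀ hq₀0 hr₀ (by rw [← hu₀]; exact hαeq)
    have hB1 : besovNorm volume (-β) q₁ r₁ g = (L : ℝ≥0∞) ^ (r₁⁻¹).toReal := by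
      unfold besovNorm
      exact hBesov (-β) q₁ r₁ hq₁0 hr₁ (by rw [← hu₁]; exact hβeq)
    have hval : ∀ j ∈ Finset.Icc (1:ℤ) (L:ℤ), aa j * mm j ^ up = 1 := by
      intro j hj
      rw [hpow2 up j, hdup, mul_zero, Real.rpow_zero]
    have horder : ∀ j k : ℤ, (j:ℝ) * d < (k:ℝ) * d → j ≠ k → aa j ≤ lam * aa k := by
      intro j k hlt hne
      simp only [haad, hlamd]
      rw [← Real.rpow_add two_pos]
      apply Real.rpow_le_rpow_of_exponent_le one_le_two
      have h1 : (1:ℝ) ≤ |(k:ℝ) - (j:ℝ)| := by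
        exact_mod_cast Int.one_le_abs (sub_ne_zero.2 (Ne.symm hne))
      have h5 : (0:ℝ) < ((k:ℝ) - (j:ℝ)) * d := by nlinarith
      have h3 : |d| ≤ (k:ℝ) * d - (j:ℝ) * d := by
        calc |d| = 1 * |d| := (one_mul _).symm
          _ ≤ |(k:ℝ) - (j:ℝ)| * |d| := mul_le_mul_of_nonneg_right h1 (abs_nonneg d)
          _ = |((k:ℝ) - (j:ℝ)) * d| := (abs_mul _ _).symm
          _ = ((k:ℝ) - (j:ℝ)) * d := abs_of_pos h5
          _ = (k:ℝ) * d - (j:ℝ) * d := by ring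
      linarith
    have hdisj : Set.PairwiseDisjoint (Finset.Icc (1:ℤ) (L:ℤ) : Set ℤ)
        (fun j => Set.Ioo (lam * aa j) (aa j)) := by
      intro j hj k hk hjk
      simp only [Function.onFun]
      have hne : (j:ℝ) * d ≠ (k:ℝ) * d := by
        intro h
        apply hjk
        have : (j:ℝ) = (k:ℝ) := mul_right_cancel₀ hd0 h
        exact_mod_cast this
      rcases lt_or_gt_of_ne hne with h | h
      · rw [Set.disjoint_left]
        intro t ht1 ht2
        have hok := horder j k h hjk
        have := ht1.2.trans_le (hok.trans ht2.1.le)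
        exact absurd this (lt_irrefl t)
      · rw [Set.disjoint_right]
        intro t ht2 ht1
        have hok := horder k j h (Ne.symm hjk)
        have := ht2.2.trans_le (hok.trans ht1.1.le)
        exact absurd this (lt_irrefl t)
    have hmeasμ : ∀ j ∈ Finset.Icc (1:ℤ) (L:ℤ), ∀ t ∈ Set.Ioo (lam * aa j) (aa j),
        ENNReal.ofReal (mm j) ≤ volume {x | t < ‖f x‖} := by
      intro j hj t ht
      rw [← hEvol j]
      apply measure_mono
      intro x hx
      simp only [Set.mem_setOf_eq]
      rw [hfval j hj x hx, Complex.norm_real, Real.norm_eq_abs, abs_of_pos (haa0 j)]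
      exact ht.2
    have hlow := lorentz_lb volume f up ρ hup0 hρpos L aa mm lam hlam0 hlam1
      (fun j _ => haa0 j) (fun j _ => hmm0 j) hval hdisj hmeasμ
    have hLdef : lorentzNorm volume p r f =
        (∫⁻ t in Set.Ioi (0:ℝ),
          (ENNReal.ofReal t * volume {x | t < ‖f x‖} ^ up) ^ ρ / ENNReal.ofReal t) ^ (1/ρ) := by
      unfold lorentzNorm
      rw [if_neg hrtop, hupeq]
    have hcomb := H g f hgmeas hfmeas (Filter.Eventually.of_forall hsum)
    rw [hB0, hB1] at hcomb
    calc ENNReal.ofReal (ε₀ ^ ρ⁻¹) * (L : ℝ≥0∞) ^ ρ⁻¹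
        = (ENNReal.ofReal ε₀ * (L : ℝ≥0∞)) ^ ρ⁻¹ := by
          rw [ENNReal.mul_rpow_of_nonneg _ _ (by positivity),
            ENNReal.ofReal_rpow_of_pos hε₀pos]
      _ ≤ (∫⁻ t in Set.Ioi (0:ℝ),
            (ENNReal.ofReal t * volume {x | t < ‖f x‖} ^ up) ^ ρ / ENNReal.ofReal t) ^ ρ⁻¹ := by
          exact ENNReal.rpow_le_rpow hlow (by positivity)
      _ = lorentzNorm volume p r f := by rw [hLdef, one_div]
      _ ≤ C * ((L : ℝ≥0∞) ^ (r₀⁻¹).toReal) ^ (1 - θ) * ((L : ℝ≥0∞) ^ (r₁⁻¹).toReal) ^ θ := hcomb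
      _ = C * (L : ℝ≥0∞) ^ ee := by
          rw [← ENNReal.rpow_mul, ← ENNReal.rpow_mul, mul_assoc,
            ← ENNReal.rpow_add _ _ hL0' hLtop']
          congr 1
          rw [heed, hx₀, hx₁]
          ring

  -- conclude
  have hgoal : r⁻¹ = ENNReal.ofReal ρ⁻¹ := by
    rw [← ENNReal.ofReal_toReal (ENNReal.inv_ne_top.2 hr0), ENNReal.toReal_inv]
  have hrhs : ENNReal.ofReal (1 - θ) * r₀⁻¹ + ENNReal.ofReal θ * r₁⁻¹ = ENNReal.ofReal ee := by
    rw [← ENNReal.ofReal_toReal (ENNReal.inv_ne_top.2 hr₀0),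
      ← ENNReal.ofReal_toReal (ENNReal.inv_ne_top.2 hr₁0),
      ← ENNReal.ofReal_mul h1θ0.le, ← ENNReal.ofReal_mul hθ0.le,
      ← ENNReal.ofReal_add (by positivity) (by positivity), heed, hx₀, hx₁]
  rw [hgoal, hrhs]
  apply ENNReal.ofReal_le_ofReal
  by_contra hcon
  push_neg at hcon
  -- real-valued consequence of `main`
  have hreal : ∀ L : ℕ, 1 ≤ L → ε₀ ^ ρ⁻¹ * (L : ℝ) ^ ρ⁻¹ ≤ C.toReal * (L : ℝ) ^ ee := by
    intro L hL
    have hL0 : (L : ℝ≥0∞) ≠ 0 := Nat.cast_ne_zero.2 (by omega)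
    have h := main L hL
    have hfin : C * (L : ℝ≥0∞) ^ ee ≠ ∞ :=
      ENNReal.mul_ne_top hC (ENNReal.rpow_ne_top_of_nonneg hee0 (ENNReal.natCast_ne_top L))
    have h2 := ENNReal.toReal_mono hfin h
    rw [ENNReal.toReal_mul, ENNReal.toReal_mul, ENNReal.toReal_ofReal (by positivity),
      ← ENNReal.toReal_rpow, ← ENNReal.toReal_rpow, ENNReal.toReal_natCast] at h2
    exact h2
  -- derive a contradiction
  set M : ℝ := C.toReal / (ε₀ ^ ρ⁻¹) with hM
  have hbound : ∀ L : ℕ, 1 ≤ L → (L : ℝ) ^ (ρ⁻¹ - ee) ≤ M := by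
    intro L hL
    have hL0 : (0 : ℝ) < L := by exact_mod_cast Nat.lt_of_lt_of_le Nat.zero_lt_one hL
    have h := hreal L hL
    have hsplit : (L : ℝ) ^ ρ⁻¹ = (L : ℝ) ^ ee * (L : ℝ) ^ (ρ⁻¹ - ee) := by
      rw [← Real.rpow_add hL0]; ring_nf
    rw [hsplit] at h
    have hεp : 0 < ε₀ ^ ρ⁻¹ := Real.rpow_pos_of_pos hε₀pos _
    have hLe : 0 < (L : ℝ) ^ ee := Real.rpow_pos_of_pos hL0 _
    have h4 : (ε₀ ^ ρ⁻¹ * (L : ℝ) ^ (ρ⁻¹ - ee)) * (L : ℝ) ^ ee ≤ C.toReal * (L : ℝ) ^ ee := by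
      calc (ε₀ ^ ρ⁻¹ * (L : ℝ) ^ (ρ⁻¹ - ee)) * (L : ℝ) ^ ee
          = ε₀ ^ ρ⁻¹ * ((L : ℝ) ^ ee * (L : ℝ) ^ (ρ⁻¹ - ee)) := by ring
        _ ≤ C.toReal * (L : ℝ) ^ ee := h
    have h3 : ε₀ ^ ρ⁻¹ * (L : ℝ) ^ (ρ⁻¹ - ee) ≤ C.toReal := le_of_mul_le_mul_right h4 hLe
    rw [hM, le_div_iff₀ hεp]
    calc (L : ℝ) ^ (ρ⁻¹ - ee) * ε₀ ^ ρ⁻¹ = ε₀ ^ ρ⁻¹ * (L : ℝ) ^ (ρ⁻¹ - ee) := by ring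
      _ ≤ C.toReal := h3
  have htend : Filter.Tendsto (fun L : ℕ => (L : ℝ) ^ (ρ⁻¹ - ee)) Filter.atTop Filter.atTop :=
    (tendsto_rpow_atTop (by linarith)).comp tendsto_natCast_atTop_atTop
  obtain ⟨L, hL1, hLM⟩ : ∃ L : ℕ, 1 ≤ L ∧ M < (L : ℝ) ^ (ρ⁻¹ - ee) := by
    have := (htend.eventually_gt_atTop M).and (Filter.eventually_ge_atTop 1)
    obtain ⟨L, h1, h2⟩ := this.exists
    exact ⟨L, h2, h1⟩
  exact absurd (hbound L hL1) (not_le.2 hLM)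
end
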